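/- arXiv:0902.4074 — 3 statements merged into one kernel-verified Lean document; each statement's English description precedes it below -/
import Mathlib

section
/- Let ψ : 𝔫⁺ → ℂ be a Lie algebra homomorphism with ψ(L_1) ≠ 0, ψ(L_2) ≠ 0, ψ(I_1) ≠ 0, and let V be a Whittaker module of type ψ for 𝒱. Then for every integer n > 0, the operators v ↦ L_n v − ψ(L_n)v and v ↦ I_n v − ψ(I_n)v on V are locally nilpotent: for every v ∈ V there exists N ∈ ℕ such that (L_n − ψ(L_n))^N v = 0 and (I_n − ψ(I_n))^N v = 0. -/
/-!
Common setup: the twisted Heisenberg–Virasoro algebra `𝒱`, its subalgebra `𝔫⁺`,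
the universal Whittaker module `M_ψ`, the quotients `L_{ψ,ξ}`, and the notions of
Whittaker vectors/modules, degrees, etc.
-/

open UniversalEnvelopingAlgebra

attribute [local instance 100] LieRing.ofAssociativeRing

/-- The twisted Heisenberg–Virasoro algebra: a complex Lie algebra with basis
`{L k, I k (k : ℤ), z 0, z 1, z 2}` (here `z 0, z 1, z 2` are the paper's `z₁, z₂, z₃`)
and the prescribed brackets. -/
class THV (V : Type) [LieRing V] [LieAlgebra ℂ V] : Type where
  L : ℤ → V
  I : ℤ → V
  z : Fin 3 → V
  basis : Module.Basis (ℤ ⊕ ℤ ⊕ Fin 3) ℂ V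
  basis_L : ∀ k : ℤ, basis (Sum.inl k) = L k
  basis_I : ∀ k : ℤ, basis (Sum.inr (Sum.inl k)) = I k
  basis_z : ∀ i : Fin 3, basis (Sum.inr (Sum.inr i)) = z i
  lie_LL : ∀ k j : ℤ, ⁅L k, L j⁆ =
    ((j : ℂ) - (k : ℂ)) • L (k + j) +
      (if j = -k then ((k : ℂ) ^ 3 - (k : ℂ)) / 12 else 0) • z 0
  lie_LI : ∀ k j : ℤ, ⁅L k, I j⁆ =
    (j : ℂ) • I (k + j) + (if j = -k then (k : ℂ) ^ 2 - (k : ℂ) else 0) • z 1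
  lie_II : ∀ k j : ℤ, ⁅I k, I j⁆ = (if j = -k then (k : ℂ) else 0) • z 2
  lie_z : ∀ i : Fin 3, ∀ x : V, ⁅z i, x⁆ = 0

namespace THV

variable (V : Type) [LieRing V] [LieAlgebra ℂ V] [THV V]

/-- `𝔫⁺ = span {L k, I k : k ≥ 1}` (a Lie subalgebra of `𝒱`). -/
def nPlus : LieSubalgebra ℂ V :=
  LieSubalgebra.lieSpan ℂ V {x | ∃ k : ℤ, 1 ≤ k ∧ (x = L k ∨ x = I k)}

theorem L_mem_nPlus {k : ℤ} (h : 1 ≤ k) : (L k : V) ∈ nPlus V :=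
  LieSubalgebra.subset_lieSpan ⟨k, h, Or.inl rfl⟩

theorem I_mem_nPlus {k : ℤ} (h : 1 ≤ k) : (I k : V) ∈ nPlus V :=
  LieSubalgebra.subset_lieSpan ⟨k, h, Or.inr rfl⟩

/-- A Whittaker vector of type `ψ` in a `𝒱`-module `W`. -/
def IsWhittakerVector (ψ : nPlus V →ₗ⁅ℂ⁆ ℂ) {W : Type} [AddCommGroup W] [Module ℂ W]
    [LieRingModule V W] (w : W) : Prop :=
  ∀ x : nPlus V, ⁅(x : V), w⁆ = ψ x • w

/-- The universal enveloping algebra `U(𝒱)`. -/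
abbrev UEA := UniversalEnvelopingAlgebra ℂ V

/-- The canonical embedding `𝒱 → U(𝒱)`. -/
noncomputable def ιV : V →ₗ⁅ℂ⁆ UEA V := UniversalEnvelopingAlgebra.ι ℂ

/-- The four central elements `z₀ = I₀, z₁, z₂, z₃` of `U(𝒱)`. -/
noncomputable def zElt : Fin 4 → UEA V
  | 0 => ιV V (I 0)
  | 1 => ιV V (z 0)
  | 2 => ιV V (z 1)
  | 3 => ιV V (z 2)

/-- The left ideal of `U(𝒱)` generated by `{x - ψ(x) : x ∈ 𝔫⁺}`;
`M_ψ = U(𝒱) ⊗_{U(𝔫⁺)} ℂ_ψ` is canonically the quotient by this left ideal. -/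
noncomputable def whittakerIdeal (ψ : nPlus V →ₗ⁅ℂ⁆ ℂ) : Submodule (UEA V) (UEA V) :=
  Submodule.span (UEA V)
    {u | ∃ x : nPlus V, u = ιV V (x : V) - algebraMap ℂ (UEA V) (ψ x)}

/-- The universal Whittaker module `M_ψ`. -/
abbrev Mpsi (ψ : nPlus V →ₗ⁅ℂ⁆ ℂ) := (UEA V) ⧸ whittakerIdeal V ψ

/-- Any quotient of `U(𝒱)` (as a left module over itself) is a `𝒱`-module. -/
noncomputable instance (p : Submodule (UEA V) (UEA V)) : LieRingModule V ((UEA V) ⧸ p) :=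
  letI : LieRingModule (UEA V) ((UEA V) ⧸ p) := LieRingModule.ofAssociativeModule
  LieRingModule.compLieHom _ (ιV V)

noncomputable instance (p : Submodule (UEA V) (UEA V)) : LieModule ℂ V ((UEA V) ⧸ p) :=
  letI : LieRingModule (UEA V) ((UEA V) ⧸ p) := LieRingModule.ofAssociativeModule
  letI : LieModule ℂ (UEA V) ((UEA V) ⧸ p) := LieModule.ofAssociativeModule
  LieModule.compLieHom _ (ιV V)

/-- The cyclic Whittaker vector `w = 1 ⊗ 1` of `M_ψ`. -/
noncomputable def mw (ψ : nPlus V →ₗ⁅ℂ⁆ ℂ) : Mpsi V ψ :=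
  Submodule.Quotient.mk 1

/-- The submodule `Σ_{i} (z_i − ξ_i·1) M_ψ` of `M_ψ`. -/
noncomputable def centralSub (ψ : nPlus V →ₗ⁅ℂ⁆ ℂ) (ξ : Fin 4 → ℂ) :
    Submodule (UEA V) (Mpsi V ψ) :=
  Submodule.span (UEA V)
    {m | ∃ i : Fin 4, ∃ y : Mpsi V ψ, m = (zElt V i - algebraMap ℂ (UEA V) (ξ i)) • y}

/-- The Whittaker module `L_{ψ,ξ} = M_ψ / Σᵢ (z_i − ξ_i·1) M_ψ`. -/
abbrev Lpsixi (ψ : nPlus V →ₗ⁅ℂ⁆ ℂ) (ξ : Fin 4 → ℂ) :=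
  Mpsi V ψ ⧸ centralSub V ψ ξ

noncomputable instance (ψ : nPlus V →ₗ⁅ℂ⁆ ℂ) (q : Submodule (UEA V) (Mpsi V ψ)) :
    LieRingModule V ((Mpsi V ψ) ⧸ q) :=
  letI : LieRingModule (UEA V) ((Mpsi V ψ) ⧸ q) := LieRingModule.ofAssociativeModule
  LieRingModule.compLieHom _ (ιV V)

noncomputable instance (ψ : nPlus V →ₗ⁅ℂ⁆ ℂ) (q : Submodule (UEA V) (Mpsi V ψ)) :
    LieModule ℂ V ((Mpsi V ψ) ⧸ q) :=
  letI : LieRingModule (UEA V) ((Mpsi V ψ) ⧸ q) := LieRingModule.ofAssociativeModule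
  letI : LieModule ℂ (UEA V) ((Mpsi V ψ) ⧸ q) := LieModule.ofAssociativeModule
  LieModule.compLieHom _ (ιV V)

/-- The image `w̄` of the cyclic Whittaker vector in `L_{ψ,ξ}`. -/
noncomputable def lw (ψ : nPlus V →ₗ⁅ℂ⁆ ℂ) (ξ : Fin 4 → ℂ) : Lpsixi V ψ ξ :=
  Submodule.Quotient.mk (mw V ψ)

/-- The size `|λ|` of a pseudopartition recorded as its multiplicity function. -/
def pdeg (f : ℕ →₀ ℕ) : ℕ := f.sum fun k m => k * m

/-- `L_{-λ} = L_{-λ_s} ⋯ L_{-λ_1} = ⋯ L_{-1}^{λ(1)} L_0^{λ(0)} ∈ U(𝒱)`,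
for a pseudopartition `λ` given by its multiplicity function. -/
noncomputable def Lword (lam : ℕ →₀ ℕ) : UEA V :=
  (((List.range (lam.support.sup id + 1)).reverse).map
    fun k : ℕ => (ιV V (L (-(k : ℤ)))) ^ (lam k)).prod

/-- `I_{-μ} = I_{-μ_r} ⋯ I_{-μ_1} = ⋯ I_{-2}^{μ(2)} I_{-1}^{μ(1)} ∈ U(𝒱)`. -/
noncomputable def Iword (mu : ℕ →₀ ℕ) : UEA V :=
  (((List.range (mu.support.sup id + 1)).reverse).map
    fun k : ℕ => (ιV V (I (-(k : ℤ)))) ^ (mu k)).prod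

/-- `z^t = z₀^{t₀} z₁^{t₁} z₂^{t₂} z₃^{t₃} ∈ U(𝒱)`. -/
noncomputable def zword (t : Fin 4 → ℕ) : UEA V :=
  ((List.finRange 4).map fun i => (zElt V i) ^ (t i)).prod

/-- Index type for the PBW-type basis of `M_ψ`: a 4-tuple `t`, a pseudopartition `λ`,
and a partition `μ` (a multiplicity function with `μ(0) = 0`). -/
abbrev WIdx : Type := (Fin 4 → ℕ) × (ℕ →₀ ℕ) × {g : ℕ →₀ ℕ // g 0 = 0}

/-- The property that `B` is the standard basis `{z^t L_{-λ} I_{-μ} w}` of `M_ψ`. -/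
def IsStdBasis (ψ : nPlus V →ₗ⁅ℂ⁆ ℂ) (B : Module.Basis WIdx ℂ (Mpsi V ψ)) : Prop :=
  ∀ (t : Fin 4 → ℕ) (lam : ℕ →₀ ℕ) (mu : {g : ℕ →₀ ℕ // g 0 = 0}),
    B (t, lam, mu) = (zword V t * Lword V lam * Iword V mu.1) • mw V ψ

/-- `maxdeg` of a vector of `M_ψ` with respect to the standard basis
(`⊥` plays the role of `-∞`). -/
noncomputable def maxdeg (ψ : nPlus V →ₗ⁅ℂ⁆ ℂ) (B : Module.Basis WIdx ℂ (Mpsi V ψ))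
    (v : Mpsi V ψ) : WithBot ℤ :=
  ((B.repr v).support.image fun p => ((pdeg p.2.1 : ℤ) + (pdeg p.2.2.1 : ℤ))).max

/-- `max_{L_0}` of a vector of `M_ψ`: the largest `λ(0)` over basis vectors occurring
with a nonzero coefficient. -/
noncomputable def maxL0 (ψ : nPlus V →ₗ⁅ℂ⁆ ℂ) (B : Module.Basis WIdx ℂ (Mpsi V ψ))
    (v : Mpsi V ψ) : WithBot ℤ :=
  ((B.repr v).support.image fun p => (p.2.1 0 : ℤ)).max

end THV

section LocNilpAux

open THV

variable {V : Type} [LieRing V] [LieAlgebra ℂ V] [THV V]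
variable {W : Type} [AddCommGroup W] [Module ℂ W] [LieRingModule V W] [LieModule ℂ V W]

/-- The "dot" operator `u ↦ ⁅y, u⁆ - c • u`. -/
noncomputable def dotOp (y : V) (c : ℂ) : Module.End ℂ W :=
  LieModule.toEnd ℂ V W y - c • 1

lemma dotOp_apply (y : V) (c : ℂ) (u : W) : dotOp y c u = ⁅y, u⁆ - c • u := rfl

lemma lie_z' (x : V) (i : Fin 3) : ⁅x, (z i : V)⁆ = 0 := by
  rw [← lie_skew, lie_z, neg_zero]

lemma dotOp_lie (y : V) (c : ℂ) (x : V) (u : W) :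
    dotOp y c ⁅x, u⁆ = ⁅⁅y, x⁆, u⁆ + ⁅x, dotOp y c u⁆ := by
  rw [dotOp_apply, dotOp_apply, leibniz_lie, lie_sub, lie_smul]
  abel

lemma dotOp_pow_mono {y : V} {c : ℂ} {N N' : ℕ} (h : N ≤ N') {m : W}
    (h0 : (dotOp y c ^ N) m = 0) : (dotOp y c ^ N') m = 0 := by
  rw [← Nat.sub_add_cancel h, pow_add, Module.End.mul_apply, h0, map_zero]

lemma dotOp_pow_lie_z (y : V) (c : ℂ) (i : Fin 3) (r : ℕ) (u : W) :
    (dotOp y c ^ r) ⁅(z i : V), u⁆ = ⁅(z i : V), (dotOp y c ^ r) u⁆ := by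
  induction r generalizing u with
  | zero => simp
  | succ r ih =>
      have h1 : ∀ u' : W, dotOp y c ⁅(z i : V), u'⁆ = ⁅(z i : V), dotOp y c u'⁆ := by
        intro u'
        rw [dotOp_lie, lie_z', zero_lie, zero_add]
      rw [pow_succ', Module.End.mul_apply, ih, h1, Module.End.mul_apply]

variable (V) in
/-- Degree-`d` part of `𝒱` (together with the centre). -/
noncomputable def Gd (d : ℤ) : Submodule ℂ V :=
  Submodule.span ℂ (({L d, I d} : Set V) ∪ Set.range (z : Fin 3 → V))

lemma L_mem_Gd (d : ℤ) : (L d : V) ∈ Gd V d :=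
  Submodule.subset_span (Or.inl (by simp))

lemma I_mem_Gd (d : ℤ) : (I d : V) ∈ Gd V d :=
  Submodule.subset_span (Or.inl (by simp))

lemma z_mem_Gd (d : ℤ) (i : Fin 3) : (z i : V) ∈ Gd V d :=
  Submodule.subset_span (Or.inr ⟨i, rfl⟩)

lemma gd_step_L (t d : ℤ) {x : V} (hx : x ∈ Gd V d) : ⁅(L t : V), x⁆ ∈ Gd V (d + t) := by
  induction hx using Submodule.span_induction with
  | mem x hxs =>
      simp only [Set.mem_union, Set.mem_insert_iff, Set.mem_singleton_iff,
        Set.mem_range] at hxs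
      rcases hxs with (rfl | rfl) | ⟨i, rfl⟩
      · rw [lie_LL, add_comm t d]
        exact add_mem (Submodule.smul_mem _ _ (L_mem_Gd _))
          (Submodule.smul_mem _ _ (z_mem_Gd _ 0))
      · rw [lie_LI, add_comm t d]
        exact add_mem (Submodule.smul_mem _ _ (I_mem_Gd _))
          (Submodule.smul_mem _ _ (z_mem_Gd _ 1))
      · rw [lie_z']; exact zero_mem _
  | zero => rw [lie_zero]; exact zero_mem _
  | add a b _ _ iha ihb => rw [lie_add]; exact add_mem iha ihb
  | smul c a _ iha => rw [lie_smul]; exact Submodule.smul_mem _ _ iha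

lemma gd_step_I (t d : ℤ) {x : V} (hx : x ∈ Gd V d) : ⁅(I t : V), x⁆ ∈ Gd V (d + t) := by
  induction hx using Submodule.span_induction with
  | mem x hxs =>
      simp only [Set.mem_union, Set.mem_insert_iff, Set.mem_singleton_iff,
        Set.mem_range] at hxs
      rcases hxs with (rfl | rfl) | ⟨i, rfl⟩
      · rw [← lie_skew, lie_LI]
        exact neg_mem (add_mem (Submodule.smul_mem _ _ (I_mem_Gd _))
          (Submodule.smul_mem _ _ (z_mem_Gd _ 1)))
      · rw [lie_II]
        exact Submodule.smul_mem _ _ (z_mem_Gd _ 2)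
      · rw [lie_z']; exact zero_mem _
  | zero => rw [lie_zero]; exact zero_mem _
  | add a b _ _ iha ihb => rw [lie_add]; exact add_mem iha ihb
  | smul c a _ iha => rw [lie_smul]; exact Submodule.smul_mem _ _ iha

/-- Iterated adjoint action. -/
def adp (y : V) (i : ℕ) (e : V) : V := (fun x : V => ⁅y, x⁆)^[i] e

lemma adp_zero (y e : V) : adp y 0 e = e := rfl

lemma adp_succ (y : V) (i : ℕ) (e : V) : adp y (i + 1) e = ⁅y, adp y i e⁆ :=
  Function.iterate_succ_apply' _ _ _

lemma gd_adp {y : V} {t : ℤ} (hstep : ∀ d : ℤ, ∀ x ∈ Gd V d, ⁅y, x⁆ ∈ Gd V (d + t))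
    {a : ℤ} {e : V} (he : e ∈ Gd V a) (i : ℕ) : adp y i e ∈ Gd V (a + (i : ℤ) * t) := by
  induction i with
  | zero => simpa [adp_zero] using he
  | succ i ih =>
      have h2 : a + ((i + 1 : ℕ) : ℤ) * t = (a + (i : ℤ) * t) + t := by push_cast; ring
      rw [adp_succ, h2]
      exact hstep _ _ ih

/-- Binomial-style descent: `T^r ⁅e, m⁆` lies in the span of `⁅(ad y)^i e, T^j m⁆`, `i+j = r`. -/
lemma dotOp_pow_lie_mem (y : V) (c : ℂ) (e : V) (m : W) (r : ℕ) :
    (dotOp y c ^ r) ⁅e, m⁆ ∈ Submodule.span ℂ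
      {w : W | ∃ i j : ℕ, i + j = r ∧ w = ⁅adp y i e, (dotOp y c ^ j) m⁆} := by
  induction r with
  | zero => exact Submodule.subset_span ⟨0, 0, rfl, by simp [adp_zero]⟩
  | succ r ih =>
      have hle : Submodule.span ℂ
          {w : W | ∃ i j : ℕ, i + j = r ∧ w = ⁅adp y i e, (dotOp y c ^ j) m⁆} ≤
          Submodule.comap (dotOp y c) (Submodule.span ℂ
            {w : W | ∃ i j : ℕ, i + j = r + 1 ∧ w = ⁅adp y i e, (dotOp y c ^ j) m⁆}) := by
        rw [Submodule.span_le]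
        rintro w ⟨i, j, hij, rfl⟩
        simp only [SetLike.mem_coe, Submodule.mem_comap]
        rw [dotOp_lie]
        refine add_mem (Submodule.subset_span ⟨i + 1, j, by omega, by rw [adp_succ]⟩)
          (Submodule.subset_span ⟨i, j + 1, by omega, by
            rw [pow_succ', Module.End.mul_apply]⟩)
      rw [pow_succ', Module.End.mul_apply]
      exact hle ih

variable (V) in
/-- `M` together with the images of `M` under the central elements. -/
noncomputable def Mtwo (M : Submodule ℂ W) : Submodule ℂ W :=
  M ⊔ (Finset.univ.sup fun i : Fin 3 => M.map (LieModule.toEnd ℂ V W (z i)))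

lemma gd_act_pos {M : Submodule ℂ W}
    (hstab : ∀ k : ℤ, 1 ≤ k → ∀ m ∈ M, ⁅(L k : V), m⁆ ∈ M ∧ ⁅(I k : V), m⁆ ∈ M)
    {d : ℤ} (hd : 1 ≤ d) {x : V} (hx : x ∈ Gd V d) {m : W} (hm : m ∈ M) :
    ⁅x, m⁆ ∈ Mtwo V M := by
  induction hx using Submodule.span_induction with
  | mem x hxs =>
      simp only [Set.mem_union, Set.mem_insert_iff, Set.mem_singleton_iff,
        Set.mem_range] at hxs
      rcases hxs with (rfl | rfl) | ⟨i, rfl⟩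
      · exact le_sup_left (α := Submodule ℂ W) (hstab d hd m hm).1
      · exact le_sup_left (α := Submodule ℂ W) (hstab d hd m hm).2
      · refine le_sup_right (α := Submodule ℂ W) ?_
        exact Finset.le_sup (f := fun i : Fin 3 => M.map (LieModule.toEnd ℂ V W (z i)))
          (Finset.mem_univ i) ⟨m, hm, rfl⟩
  | zero => rw [zero_lie]; exact zero_mem _
  | add a b _ _ iha ihb => rw [add_lie]; exact add_mem iha ihb
  | smul c a _ iha => rw [smul_lie]; exact Submodule.smul_mem _ _ iha

lemma Mtwo_pow_zero {M : Submodule ℂ W} {y : V} {c : ℂ} {N0 : ℕ}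
    (hnil : ∀ m ∈ M, (dotOp y c ^ N0) m = 0) :
    ∀ u ∈ Mtwo V M, (dotOp y c ^ N0) u = 0 := by
  have : Mtwo V M ≤ LinearMap.ker (dotOp y c ^ N0) := by
    refine sup_le (fun m hm => hnil m hm) (Finset.sup_le fun i _ => ?_)
    rw [Submodule.map_le_iff_le_comap]
    intro m hm
    simp only [Submodule.mem_comap, LinearMap.mem_ker]
    show (dotOp y c ^ N0) ⁅(z i : V), m⁆ = 0
    rw [dotOp_pow_lie_z, hnil m hm, lie_zero]
  exact fun u hu => this hu

/-- Key nilpotency computation for a single bracket `⁅e, m⁆`. -/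
lemma component_zero {M : Submodule ℂ W}
    (hstab : ∀ k : ℤ, 1 ≤ k → ∀ m ∈ M, ⁅(L k : V), m⁆ ∈ M ∧ ⁅(I k : V), m⁆ ∈ M)
    {y : V} {t : ℤ} (ht : 1 ≤ t) {c : ℂ}
    (hstep : ∀ d : ℤ, ∀ x ∈ Gd V d, ⁅y, x⁆ ∈ Gd V (d + t))
    (hyM : ∀ m ∈ M, ⁅y, m⁆ ∈ M)
    {N0 : ℕ} (hnil : ∀ m ∈ M, (dotOp y c ^ N0) m = 0)
    {kx : ℤ} (hkx : kx ≤ 0) {a : ℤ} (ha : kx ≤ a)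
    {e : V} (he : e ∈ Gd V a) {m : W} (hm : m ∈ M) :
    (dotOp y c ^ (N0 + (N0 + (1 - kx).toNat))) ⁅e, m⁆ = 0 := by
  have hTm : ∀ j : ℕ, (dotOp y c ^ j) m ∈ M := by
    intro j
    induction j with
    | zero => simpa using hm
    | succ j ih =>
        rw [pow_succ', Module.End.mul_apply, dotOp_apply]
        exact sub_mem (hyM _ ih) (Submodule.smul_mem _ _ ih)
  set R := (1 - kx).toNat with hR
  have h1 : (dotOp y c ^ (N0 + R)) ⁅e, m⁆ ∈ Mtwo V M := by
    refine Submodule.span_le.mpr ?_ (dotOp_pow_lie_mem y c e m (N0 + R))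
    rintro w ⟨i, j, hij, rfl⟩
    by_cases hj : N0 ≤ j
    · rw [dotOp_pow_mono hj (hnil m hm), lie_zero]
      exact zero_mem _
    · have hiR : R ≤ i := by omega
      have hdeg : 1 ≤ a + (i : ℤ) * t := by
        have h1 : (R : ℤ) ≤ (i : ℤ) := by exact_mod_cast hiR
        have h2 : (1 - kx) ≤ (R : ℤ) := Int.self_le_toNat _
        nlinarith [Int.natCast_nonneg i]
      exact gd_act_pos hstab hdeg (gd_adp hstep he i) (hTm j)
  have h2 : (dotOp y c ^ (N0 + (N0 + R))) ⁅e, m⁆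
      = (dotOp y c ^ N0) ((dotOp y c ^ (N0 + R)) ⁅e, m⁆) := by
    rw [pow_add, Module.End.mul_apply]
  rw [h2]
  exact Mtwo_pow_zero hnil _ h1

variable (V) in
/-- The enlargement of `M` by brackets with modes of degree in `[kx, 0]` and centres. -/
noncomputable def Mbig (kx : ℤ) (M : Submodule ℂ W) : Submodule ℂ W :=
  M ⊔ ((Finset.Icc kx 0).sup fun a =>
        M.map (LieModule.toEnd ℂ V W (L a)) ⊔ M.map (LieModule.toEnd ℂ V W (I a)))
    ⊔ (Finset.univ.sup fun i : Fin 3 => M.map (LieModule.toEnd ℂ V W (z i)))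

lemma M_le_Mbig (kx : ℤ) (M : Submodule ℂ W) : M ≤ Mbig V kx M := by
  unfold Mbig
  exact le_sup_of_le_left le_sup_left

lemma mapL_le_Mbig {kx a : ℤ} (h1 : kx ≤ a) (h2 : a ≤ 0) (M : Submodule ℂ W) :
    M.map (LieModule.toEnd ℂ V W (L a)) ≤ Mbig V kx M := by
  unfold Mbig
  exact le_sup_of_le_left (le_sup_of_le_right (le_trans le_sup_left
    (Finset.le_sup (f := fun b : ℤ => M.map (LieModule.toEnd ℂ V W (L b)) ⊔
      M.map (LieModule.toEnd ℂ V W (I b))) (Finset.mem_Icc.mpr ⟨h1, h2⟩))))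

lemma mapI_le_Mbig {kx a : ℤ} (h1 : kx ≤ a) (h2 : a ≤ 0) (M : Submodule ℂ W) :
    M.map (LieModule.toEnd ℂ V W (I a)) ≤ Mbig V kx M := by
  unfold Mbig
  exact le_sup_of_le_left (le_sup_of_le_right (le_trans le_sup_right
    (Finset.le_sup (f := fun b : ℤ => M.map (LieModule.toEnd ℂ V W (L b)) ⊔
      M.map (LieModule.toEnd ℂ V W (I b))) (Finset.mem_Icc.mpr ⟨h1, h2⟩))))

lemma mapz_le_Mbig (kx : ℤ) (i : Fin 3) (M : Submodule ℂ W) :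
    M.map (LieModule.toEnd ℂ V W (z i)) ≤ Mbig V kx M := by
  unfold Mbig
  exact le_sup_of_le_right
    (Finset.le_sup (f := fun j : Fin 3 => M.map (LieModule.toEnd ℂ V W (z j)))
      (Finset.mem_univ i))

lemma Mtwo_le_Mbig (kx : ℤ) (M : Submodule ℂ W) : Mtwo V M ≤ Mbig V kx M := by
  unfold Mtwo Mbig
  exact sup_le (le_sup_of_le_left le_sup_left) le_sup_right

lemma gd_act_mid {kx : ℤ} {M : Submodule ℂ W} {d : ℤ} (h1 : kx ≤ d) (h2 : d ≤ 0)
    {x : V} (hx : x ∈ Gd V d) {m : W} (hm : m ∈ M) :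
    ⁅x, m⁆ ∈ Mbig V kx M := by
  induction hx using Submodule.span_induction with
  | mem x hxs =>
      simp only [Set.mem_union, Set.mem_insert_iff, Set.mem_singleton_iff,
        Set.mem_range] at hxs
      rcases hxs with (rfl | rfl) | ⟨i, rfl⟩
      · exact mapL_le_Mbig h1 h2 M ⟨m, hm, rfl⟩
      · exact mapI_le_Mbig h1 h2 M ⟨m, hm, rfl⟩
      · exact mapz_le_Mbig kx i M ⟨m, hm, rfl⟩
  | zero => rw [zero_lie]; exact zero_mem _
  | add a b _ _ iha ihb => rw [add_lie]; exact add_mem iha ihb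
  | smul c a _ iha => rw [smul_lie]; exact Submodule.smul_mem _ _ iha

variable (V) in
/-- A finite-dimensional subspace witnessing local nilpotency. -/
def GoodM (ψL ψI : ℤ → ℂ) (M : Submodule ℂ W) : Prop :=
  FiniteDimensional ℂ M ∧
  (∀ k : ℤ, 1 ≤ k → ∀ m ∈ M, ⁅(L k : V), m⁆ ∈ M ∧ ⁅(I k : V), m⁆ ∈ M) ∧
  (∀ k : ℤ, 1 ≤ k → ∃ N : ℕ, ∀ m ∈ M,
    (dotOp (L k : V) (ψL k) ^ N) m = 0 ∧ (dotOp (I k : V) (ψI k) ^ N) m = 0)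

lemma good_Mbig {ψL ψI : ℤ → ℂ} {M : Submodule ℂ W} (hM : GoodM V ψL ψI M)
    {kx : ℤ} (hkx : kx ≤ 0) : GoodM V ψL ψI (Mbig V kx M) := by
  obtain ⟨hfd, hstab, hnil⟩ := hM
  refine ⟨?_, ?_, ?_⟩
  · haveI := hfd
    unfold Mbig
    infer_instance
  · -- stability
    intro k hk m hm
    have main : ∀ y : V, (∀ d : ℤ, ∀ x ∈ Gd V d, ⁅y, x⁆ ∈ Gd V (d + k)) →
        (∀ m' ∈ M, ⁅y, m'⁆ ∈ M) → ⁅y, m⁆ ∈ Mbig V kx M := by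
      intro y hstep hyM
      have hcomap : Mbig V kx M ≤ Submodule.comap (LieModule.toEnd ℂ V W y)
          (Mbig V kx M) := by
        refine sup_le (sup_le ?_ (Finset.sup_le fun a ha => ?_)) (Finset.sup_le fun i _ => ?_)
        · intro m' hm'
          exact M_le_Mbig kx M (hyM m' hm')
        · obtain ⟨ha1, ha2⟩ := Finset.mem_Icc.mp ha
          have key : ∀ e : V, e ∈ Gd V a → (∀ m' ∈ M, ⁅e, ⁅y, m'⁆⁆ ∈ Mbig V kx M) →
              ∀ m' ∈ M, ⁅y, ⁅e, m'⁆⁆ ∈ Mbig V kx M := by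
            intro e hea hmap m' hm'
            rw [leibniz_lie]
            refine add_mem ?_ (hmap m' hm')
            have hGd : ⁅y, e⁆ ∈ Gd V (a + k) := hstep a e hea
            rcases le_or_gt (a + k) 0 with hle | hlt
            · exact gd_act_mid (by omega) hle hGd hm'
            · exact Mtwo_le_Mbig kx M (gd_act_pos hstab hlt hGd hm')
          refine sup_le ?_ ?_
          · rw [Submodule.map_le_iff_le_comap]
            intro m' hm'
            simp only [Submodule.mem_comap]
            exact key (L a) (L_mem_Gd a)
              (fun m'' hm'' => mapL_le_Mbig ha1 ha2 M ⟨_, hyM m'' hm'', rfl⟩) m' hm'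
          · rw [Submodule.map_le_iff_le_comap]
            intro m' hm'
            simp only [Submodule.mem_comap]
            exact key (I a) (I_mem_Gd a)
              (fun m'' hm'' => mapI_le_Mbig ha1 ha2 M ⟨_, hyM m'' hm'', rfl⟩) m' hm'
        · rw [Submodule.map_le_iff_le_comap]
          intro m' hm'
          simp only [Submodule.mem_comap]
          show ⁅y, ⁅(z i : V), m'⁆⁆ ∈ Mbig V kx M
          rw [leibniz_lie, lie_z', zero_lie, zero_add]
          exact mapz_le_Mbig kx i M ⟨_, hyM m' hm', rfl⟩
      exact hcomap hm
    constructor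
    · exact main (L k) (fun d x hx => gd_step_L k d hx) (fun m' hm' => (hstab k hk m' hm').1)
    · exact main (I k) (fun d x hx => gd_step_I k d hx) (fun m' hm' => (hstab k hk m' hm').2)
  · -- nilpotency
    intro k hk
    obtain ⟨N0, hN0⟩ := hnil k hk
    refine ⟨N0 + (N0 + (1 - kx).toNat), fun m hm => ?_⟩
    have main : ∀ y : V, ∀ c : ℂ, (∀ d : ℤ, ∀ x ∈ Gd V d, ⁅y, x⁆ ∈ Gd V (d + k)) →
        (∀ m' ∈ M, ⁅y, m'⁆ ∈ M) → (∀ m' ∈ M, (dotOp y c ^ N0) m' = 0) →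
        (dotOp y c ^ (N0 + (N0 + (1 - kx).toNat))) m = 0 := by
      intro y c hstep hyM hnily
      have hker : Mbig V kx M ≤ LinearMap.ker (dotOp y c ^ (N0 + (N0 + (1 - kx).toNat))) := by
        refine sup_le (sup_le ?_ (Finset.sup_le fun a ha => ?_)) (Finset.sup_le fun i _ => ?_)
        · intro m' hm'
          simp only [LinearMap.mem_ker]
          exact dotOp_pow_mono (by omega) (hnily m' hm')
        · obtain ⟨ha1, ha2⟩ := Finset.mem_Icc.mp ha
          refine sup_le ?_ ?_
          · rw [Submodule.map_le_iff_le_comap]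
            intro m' hm'
            simp only [Submodule.mem_comap, LinearMap.mem_ker]
            exact component_zero hstab hk hstep hyM hnily hkx ha1 (L_mem_Gd a) hm'
          · rw [Submodule.map_le_iff_le_comap]
            intro m' hm'
            simp only [Submodule.mem_comap, LinearMap.mem_ker]
            exact component_zero hstab hk hstep hyM hnily hkx ha1 (I_mem_Gd a) hm'
        · rw [Submodule.map_le_iff_le_comap]
          intro m' hm'
          simp only [Submodule.mem_comap, LinearMap.mem_ker]
          show (dotOp y c ^ _) ⁅(z i : V), m'⁆ = 0
          rw [dotOp_pow_lie_z, dotOp_pow_mono (by omega : N0 ≤ _) (hnily m' hm'), lie_zero]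
      exact hker hm
    constructor
    · exact main (L k) (ψL k) (fun d x hx => gd_step_L k d hx)
        (fun m' hm' => (hstab k hk m' hm').1) (fun m' hm' => (hN0 m' hm').1)
    · exact main (I k) (ψI k) (fun d x hx => gd_step_I k d hx)
        (fun m' hm' => (hstab k hk m' hm').2) (fun m' hm' => (hN0 m' hm').2)

lemma good_sup {ψL ψI : ℤ → ℂ} {M1 M2 : Submodule ℂ W}
    (h1 : GoodM V ψL ψI M1) (h2 : GoodM V ψL ψI M2) : GoodM V ψL ψI (M1 ⊔ M2) := by
  obtain ⟨hfd1, hstab1, hnil1⟩ := h1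
  obtain ⟨hfd2, hstab2, hnil2⟩ := h2
  refine ⟨?_, ?_, ?_⟩
  · haveI := hfd1; haveI := hfd2; infer_instance
  · intro k hk m hm
    obtain ⟨m1, hm1, m2, hm2, rfl⟩ := Submodule.mem_sup.mp hm
    constructor
    · rw [lie_add]
      exact add_mem (le_sup_left (α := Submodule ℂ W) (hstab1 k hk m1 hm1).1)
        (le_sup_right (α := Submodule ℂ W) (hstab2 k hk m2 hm2).1)
    · rw [lie_add]
      exact add_mem (le_sup_left (α := Submodule ℂ W) (hstab1 k hk m1 hm1).2)
        (le_sup_right (α := Submodule ℂ W) (hstab2 k hk m2 hm2).2)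
  · intro k hk
    obtain ⟨N1, hN1⟩ := hnil1 k hk
    obtain ⟨N2, hN2⟩ := hnil2 k hk
    refine ⟨max N1 N2, fun m hm => ?_⟩
    obtain ⟨m1, hm1, m2, hm2, rfl⟩ := Submodule.mem_sup.mp hm
    constructor
    · rw [map_add, dotOp_pow_mono (le_max_left N1 N2) (hN1 m1 hm1).1,
        dotOp_pow_mono (le_max_right N1 N2) (hN2 m2 hm2).1, add_zero]
    · rw [map_add, dotOp_pow_mono (le_max_left N1 N2) (hN1 m1 hm1).2,
        dotOp_pow_mono (le_max_right N1 N2) (hN2 m2 hm2).2, add_zero]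

variable (V) in
/-- The set of vectors contained in some good finite-dimensional subspace. -/
noncomputable def Sc (ψL ψI : ℤ → ℂ) : Submodule ℂ W where
  carrier := {v | ∃ M : Submodule ℂ W, GoodM V ψL ψI M ∧ v ∈ M}
  zero_mem' := ⟨⊥, ⟨inferInstance, fun k _ m hm => by
      rw [Submodule.mem_bot] at hm
      simp [hm], fun k _ => ⟨0, fun m hm => by
      rw [Submodule.mem_bot] at hm
      simp [hm]⟩⟩, zero_mem _⟩
  add_mem' := by
    rintro a b ⟨M1, h1, ha⟩ ⟨M2, h2, hb⟩
    exact ⟨M1 ⊔ M2, good_sup h1 h2,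
      add_mem (le_sup_left (α := Submodule ℂ W) ha) (le_sup_right (α := Submodule ℂ W) hb)⟩
  smul_mem' := by
    rintro c v ⟨M, h, hv⟩
    exact ⟨M, h, Submodule.smul_mem _ _ hv⟩

lemma Sc_lie (ψL ψI : ℤ → ℂ) (x : V) {v : W} (hv : v ∈ Sc V ψL ψI) :
    ⁅x, v⁆ ∈ Sc V ψL ψI := by
  obtain ⟨M, hM, hvM⟩ := hv
  have hx : x ∈ Submodule.span ℂ (Set.range ⇑(THV.basis : Module.Basis (ℤ ⊕ ℤ ⊕ Fin 3) ℂ V)) := by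
    rw [Module.Basis.span_eq]; exact Submodule.mem_top
  induction hx using Submodule.span_induction with
  | mem x hxs =>
      obtain ⟨idx, rfl⟩ := hxs
      have hLcase : ∀ k : ℤ, ⁅(L k : V), v⁆ ∈ Sc V ψL ψI := by
        intro k
        rcases le_or_gt 1 k with hk | hk
        · exact ⟨M, hM, (hM.2.1 k hk v hvM).1⟩
        · exact ⟨Mbig V k M, good_Mbig hM (by omega),
            mapL_le_Mbig le_rfl (by omega) M ⟨v, hvM, rfl⟩⟩
      have hIcase : ∀ k : ℤ, ⁅(I k : V), v⁆ ∈ Sc V ψL ψI := by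
        intro k
        rcases le_or_gt 1 k with hk | hk
        · exact ⟨M, hM, (hM.2.1 k hk v hvM).2⟩
        · exact ⟨Mbig V k M, good_Mbig hM (by omega),
            mapI_le_Mbig le_rfl (by omega) M ⟨v, hvM, rfl⟩⟩
      rcases idx with k | k | i
      · rw [basis_L]; exact hLcase k
      · rw [basis_I]; exact hIcase k
      · rw [basis_z]
        exact ⟨Mbig V 0 M, good_Mbig hM le_rfl, mapz_le_Mbig 0 i M ⟨v, hvM, rfl⟩⟩
  | zero => rw [zero_lie]; exact zero_mem _
  | add a b _ _ iha ihb => rw [add_lie]; exact add_mem iha ihb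
  | smul c a _ iha => rw [smul_lie]; exact Submodule.smul_mem _ _ iha

end LocNilpAux

open THV in
/-- the dot-action operators `L_n − ψ(L_n)` and `I_n − ψ(I_n)` (`n > 0`) are
locally nilpotent on any Whittaker module of type `ψ`. -/
theorem dot_action_locally_nilpotent
    (V : Type) [LieRing V] [LieAlgebra ℂ V] [THV V]
    (ψ : nPlus V →ₗ⁅ℂ⁆ ℂ)
    (hL1 : ψ ⟨THV.L 1, L_mem_nPlus V le_rfl⟩ ≠ 0)
    (hL2 : ψ ⟨THV.L 2, L_mem_nPlus V one_le_two⟩ ≠ 0)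
    (hI1 : ψ ⟨THV.I 1, I_mem_nPlus V le_rfl⟩ ≠ 0)
    (W : Type) [AddCommGroup W] [Module ℂ W] [LieRingModule V W] [LieModule ℂ V W]
    (wc : W) (hwc : IsWhittakerVector V ψ wc)
    (hgen : LieSubmodule.lieSpan ℂ V {wc} = ⊤)
    (n : ℤ) (hn : 1 ≤ n) (v : W) :
    (∃ N : ℕ,
      ((LieModule.toEnd ℂ V W (THV.L n) -
        ψ ⟨THV.L n, L_mem_nPlus V hn⟩ • (1 : Module.End ℂ W)) ^ N) v = 0) ∧
    (∃ N : ℕ,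
      ((LieModule.toEnd ℂ V W (THV.I n) -
        ψ ⟨THV.I n, I_mem_nPlus V hn⟩ • (1 : Module.End ℂ W)) ^ N) v = 0) := by
  classical
  set ψL : ℤ → ℂ := fun k => if h : 1 ≤ k then ψ ⟨THV.L k, L_mem_nPlus V h⟩ else 0 with hψL
  set ψI : ℤ → ℂ := fun k => if h : 1 ≤ k then ψ ⟨THV.I k, I_mem_nPlus V h⟩ else 0 with hψI
  have hψLk : ∀ (k : ℤ) (hk : 1 ≤ k), ψL k = ψ ⟨THV.L k, L_mem_nPlus V hk⟩ := by
    intro k hk; rw [hψL]; exact dif_pos hk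
  have hψIk : ∀ (k : ℤ) (hk : 1 ≤ k), ψI k = ψ ⟨THV.I k, I_mem_nPlus V hk⟩ := by
    intro k hk; rw [hψI]; exact dif_pos hk
  have hwcS : wc ∈ Sc V ψL ψI := by
    refine ⟨Submodule.span ℂ {wc}, ⟨?_, ?_, ?_⟩, Submodule.mem_span_singleton_self wc⟩
    · exact FiniteDimensional.span_of_finite ℂ (Set.toFinite _)
    · intro k hk m hm
      obtain ⟨c, rfl⟩ := Submodule.mem_span_singleton.mp hm
      have hL : ⁅(THV.L k : V), wc⁆ = ψ ⟨THV.L k, L_mem_nPlus V hk⟩ • wc :=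
        hwc ⟨THV.L k, L_mem_nPlus V hk⟩
      have hI : ⁅(THV.I k : V), wc⁆ = ψ ⟨THV.I k, I_mem_nPlus V hk⟩ • wc :=
        hwc ⟨THV.I k, I_mem_nPlus V hk⟩
      constructor
      · rw [lie_smul, hL]
        exact Submodule.smul_mem _ _ (Submodule.smul_mem _ _
          (Submodule.mem_span_singleton_self wc))
      · rw [lie_smul, hI]
        exact Submodule.smul_mem _ _ (Submodule.smul_mem _ _
          (Submodule.mem_span_singleton_self wc))
    · intro k hk
      refine ⟨1, fun m hm => ?_⟩
      obtain ⟨c, rfl⟩ := Submodule.mem_span_singleton.mp hm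
      have hL : ⁅(THV.L k : V), wc⁆ = ψL k • wc := by
        rw [hψLk k hk]; exact hwc ⟨THV.L k, L_mem_nPlus V hk⟩
      have hI : ⁅(THV.I k : V), wc⁆ = ψI k • wc := by
        rw [hψIk k hk]; exact hwc ⟨THV.I k, I_mem_nPlus V hk⟩
      constructor
      · rw [pow_one, dotOp_apply, lie_smul, hL, smul_comm, sub_self]
      · rw [pow_one, dotOp_apply, lie_smul, hI, smul_comm, sub_self]
  let Slie : LieSubmodule ℂ V W :=
    { Sc V ψL ψI with
      lie_mem := fun {x m} hm => Sc_lie ψL ψI x hm }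
  have hS : v ∈ Sc V ψL ψI := by
    have hle : LieSubmodule.lieSpan ℂ V {wc} ≤ Slie :=
      (LieSubmodule.lieSpan_le).mpr (Set.singleton_subset_iff.mpr hwcS)
    rw [hgen] at hle
    exact hle (LieSubmodule.mem_top v)
  obtain ⟨M, hM, hvM⟩ := hS
  obtain ⟨N, hN⟩ := hM.2.2 n hn
  constructor
  · exact ⟨N, by rw [← hψLk n hn]; exact (hN v hvM).1⟩
  · exact ⟨N, by rw [← hψIk n hn]; exact (hN v hvM).2⟩
end

section
/- Let ψ : 𝔫⁺ → ℂ be a Lie algebra homomorphism with ψ(L_1) ≠ 0, ψ(L_2) ≠ 0, ψ(I_1) ≠ 0, and let V be a Whittaker module of type ψ for 𝒱. Regard V as an 𝔫⁺-module under the dot action x · v = xv − ψ(x)v. Then for every v ∈ V, the 𝔫⁺-submodule U(𝔫⁺) · v generated by v under the dot action is a finite-dimensional subspace of V. -/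
/-!
Common setup: the twisted Heisenberg–Virasoro algebra `𝒱`, its subalgebra `𝔫⁺`,
the universal Whittaker module `M_ψ`, the quotients `L_{ψ,ξ}`, and the notions of
Whittaker vectors/modules, degrees, etc.
-/

open UniversalEnvelopingAlgebra

attribute [instance 100] LieRing.ofAssociativeRing

namespace WhitAux
open THV

variable (V : Type) [LieRing V] [LieAlgebra ℂ V] [THV V]

/-- index type for basis factors -/
abbrev F : Type := ℤ ⊕ ℤ ⊕ Fin 3

def deg : F → ℤ
  | Sum.inl k => k
  | Sum.inr (Sum.inl k) => k
  | Sum.inr (Sum.inr _) => 0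

noncomputable def elt (f : F) : V := THV.basis f

def degsum (l : List F) : ℤ := (l.map deg).sum

@[simp] lemma degsum_nil : degsum [] = 0 := rfl
@[simp] lemma degsum_cons (f : F) (l : List F) : degsum (f :: l) = deg f + degsum l := rfl
@[simp] lemma degsum_append (l1 l2 : List F) : degsum (l1 ++ l2) = degsum l1 + degsum l2 := by
  simp [degsum]

@[simp] lemma elt_inl (k : ℤ) : elt V (Sum.inl k) = THV.L k := THV.basis_L k
@[simp] lemma elt_inrl (k : ℤ) : elt V (Sum.inr (Sum.inl k)) = THV.I k := THV.basis_I k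
@[simp] lemma elt_inrr (i : Fin 3) : elt V (Sum.inr (Sum.inr i)) = THV.z i := THV.basis_z i

/-- The bracket of two basis elements lies in the span of basis elements of the
sum degree. -/
lemma lie_elt_elt (a b : F) :
    ⁅elt V a, elt V b⁆ ∈
      Submodule.span ℂ {x : V | ∃ h : F, deg h = deg a + deg b ∧ x = elt V h} := by
  have memh : ∀ h : F, deg h = deg a + deg b → ∀ x : V, x = elt V h →
      x ∈ Submodule.span ℂ {x : V | ∃ h : F, deg h = deg a + deg b ∧ x = elt V h} :=
    fun h hh x hx => Submodule.subset_span ⟨h, hh, hx⟩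
  rcases a with k | k | i <;> rcases b with j | j | j
  · rw [elt_inl, elt_inl, THV.lie_LL]
    refine add_mem (Submodule.smul_mem _ _ (memh (Sum.inl (k+j)) (by simp [deg]) _ (by simp))) ?_
    by_cases h : j = -k
    · subst h
      exact Submodule.smul_mem _ _ (memh (Sum.inr (Sum.inr 0)) (by simp [deg]) _ (by simp))
    · simp [h]
  · rw [elt_inl, elt_inrl, THV.lie_LI]
    refine add_mem (Submodule.smul_mem _ _ (memh (Sum.inr (Sum.inl (k+j))) (by simp [deg]) _ (by simp))) ?_
    by_cases h : j = -k
    · subst h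
      exact Submodule.smul_mem _ _ (memh (Sum.inr (Sum.inr 1)) (by simp [deg]) _ (by simp))
    · simp [h]
  · rw [elt_inl, elt_inrr, ← lie_skew, THV.lie_z]
    simpa using zero_mem _
  · rw [elt_inrl, elt_inl, ← lie_skew, THV.lie_LI]
    refine neg_mem (add_mem (Submodule.smul_mem _ _
      (memh (Sum.inr (Sum.inl (j+k))) (by simp [deg]; ring) _ (by simp))) ?_)
    by_cases h : k = -j
    · subst h
      exact Submodule.smul_mem _ _ (memh (Sum.inr (Sum.inr 1)) (by simp [deg]) _ (by simp))
    · simp [h]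
  · rw [elt_inrl, elt_inrl, THV.lie_II]
    by_cases h : j = -k
    · subst h
      exact Submodule.smul_mem _ _ (memh (Sum.inr (Sum.inr 2)) (by simp [deg]) _ (by simp))
    · simp [h]
  · rw [elt_inrl, elt_inrr, ← lie_skew, THV.lie_z]
    simpa using zero_mem _
  all_goals rw [elt_inrr, THV.lie_z]; exact zero_mem _

/-- The generating set of `nPlus`. -/
def PG : Set V := {x | ∃ k : ℤ, 1 ≤ k ∧ (x = THV.L k ∨ x = THV.I k)}

lemma PG_subset_nPlus : PG V ⊆ (nPlus V : Set V) := by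
  rintro x ⟨k, hk, h | h⟩ <;> subst h
  · exact L_mem_nPlus V hk
  · exact I_mem_nPlus V hk

/-- `span PG` is closed under the bracket. -/
lemma lie_mem_spanPG : ∀ x ∈ Submodule.span ℂ (PG V), ∀ y ∈ Submodule.span ℂ (PG V),
    ⁅x, y⁆ ∈ Submodule.span ℂ (PG V) := by
  intro x hx y hy
  induction hx using Submodule.span_induction with
  | zero => simp
  | add a b _ _ iha ihb => rw [add_lie]; exact add_mem iha ihb
  | smul c a _ iha => rw [smul_lie]; exact Submodule.smul_mem _ _ iha
  | mem a ha =>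
    induction hy using Submodule.span_induction with
    | zero => simp
    | add c d _ _ ihc ihd => rw [lie_add]; exact add_mem ihc ihd
    | smul c d _ ihd => rw [lie_smul]; exact Submodule.smul_mem _ _ ihd
    | mem b hb =>
      obtain ⟨k, hk, ha | ha⟩ := ha <;> obtain ⟨j, hj, hb | hb⟩ := hb <;> subst ha hb
      · rw [THV.lie_LL, if_neg (by omega)]
        have hm : THV.L (k + j) ∈ Submodule.span ℂ (PG V) :=
          Submodule.subset_span ⟨k + j, by omega, Or.inl rfl⟩
        simpa using Submodule.smul_mem _ ((j:ℂ) - k) hm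
      · rw [THV.lie_LI, if_neg (by omega)]
        have hm : THV.I (k + j) ∈ Submodule.span ℂ (PG V) :=
          Submodule.subset_span ⟨k + j, by omega, Or.inr rfl⟩
        simpa using Submodule.smul_mem _ (j:ℂ) hm
      · rw [← lie_skew, THV.lie_LI, if_neg (by omega)]
        have hm : THV.I (j + k) ∈ Submodule.span ℂ (PG V) :=
          Submodule.subset_span ⟨j + k, by omega, Or.inr rfl⟩
        simpa using neg_mem (Submodule.smul_mem _ (k:ℂ) hm)
      · rw [THV.lie_II, if_neg (by omega)]
        simp

/-- `span PG` as a Lie subalgebra. -/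
noncomputable def K : LieSubalgebra ℂ V :=
  { Submodule.span ℂ (PG V) with
    lie_mem' := fun ha hb => lie_mem_spanPG V _ ha _ hb }

lemma nPlus_le_spanPG : ∀ x ∈ nPlus V, x ∈ Submodule.span ℂ (PG V) := by
  intro x hx
  exact (LieSubalgebra.lieSpan_le (K := K V)).mpr Submodule.subset_span hx

lemma spanPG_le_nPlus : ∀ x ∈ Submodule.span ℂ (PG V), x ∈ nPlus V := by
  intro x hx
  exact Submodule.span_le.mpr (PG_subset_nPlus V) hx

variable (ψ : nPlus V →ₗ⁅ℂ⁆ ℂ)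

lemma psi_lie (a b : nPlus V) : ψ ⁅a, b⁆ = 0 := by
  rw [LieHom.map_lie, Ring.lie_def]; ring

lemma psi_L_zero {k : ℤ} (hk : 3 ≤ k) (h : (THV.L k : V) ∈ nPlus V) :
    ψ ⟨THV.L k, h⟩ = 0 := by
  have h1 : (THV.L 1 : V) ∈ nPlus V := L_mem_nPlus V le_rfl
  have hk1 : (THV.L (k - 1) : V) ∈ nPlus V := L_mem_nPlus V (by omega)
  have key : (⁅(⟨THV.L 1, h1⟩ : nPlus V), (⟨THV.L (k - 1), hk1⟩ : nPlus V)⁆ : nPlus V)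
      = ((k : ℂ) - 2) • ⟨THV.L k, h⟩ := by
    apply Subtype.ext
    rw [LieSubalgebra.coe_bracket]
    show ⁅(THV.L 1 : V), THV.L (k - 1)⁆ = _
    rw [THV.lie_LL, if_neg (by omega), zero_smul, add_zero,
      show (1:ℤ) + (k - 1) = k by omega]
    congr 1
    push_cast
    ring
  have := psi_lie V ψ ⟨THV.L 1, h1⟩ ⟨THV.L (k - 1), hk1⟩
  rw [key, map_smul, smul_eq_mul] at this
  have hne : (k : ℂ) - 2 ≠ 0 := by
    have hk2 : k ≠ 2 := by omega
    exact sub_ne_zero.mpr (by exact_mod_cast hk2)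
  exact (mul_eq_zero.mp this).resolve_left hne

lemma psi_I_zero {k : ℤ} (hk : 2 ≤ k) (h : (THV.I k : V) ∈ nPlus V) :
    ψ ⟨THV.I k, h⟩ = 0 := by
  have h1 : (THV.L 1 : V) ∈ nPlus V := L_mem_nPlus V le_rfl
  have hk1 : (THV.I (k - 1) : V) ∈ nPlus V := I_mem_nPlus V (by omega)
  have key : (⁅(⟨THV.L 1, h1⟩ : nPlus V), (⟨THV.I (k - 1), hk1⟩ : nPlus V)⁆ : nPlus V)
      = ((k : ℂ) - 1) • ⟨THV.I k, h⟩ := by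
    apply Subtype.ext
    rw [LieSubalgebra.coe_bracket]
    show ⁅(THV.L 1 : V), THV.I (k - 1)⁆ = _
    rw [THV.lie_LI, if_neg (by omega), zero_smul, add_zero,
      show (1:ℤ) + (k - 1) = k by omega]
    congr 1
    push_cast
    ring
  have := psi_lie V ψ ⟨THV.L 1, h1⟩ ⟨THV.I (k - 1), hk1⟩
  rw [key, map_smul, smul_eq_mul] at this
  have hne : (k : ℂ) - 1 ≠ 0 := by
    have hk2 : k ≠ 1 := by omega
    exact sub_ne_zero.mpr (by exact_mod_cast hk2)
  exact (mul_eq_zero.mp this).resolve_left hne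

/-- `ψ` extended to basis factors. -/
noncomputable def psiF : F → ℂ
  | Sum.inl k => if h : 1 ≤ k then ψ ⟨THV.L k, L_mem_nPlus V h⟩ else 0
  | Sum.inr (Sum.inl k) => if h : 1 ≤ k then ψ ⟨THV.I k, I_mem_nPlus V h⟩ else 0
  | Sum.inr (Sum.inr _) => 0

lemma psiF_ne_zero_deg_le {g : F} (h : psiF V ψ g ≠ 0) : deg g ≤ 2 := by
  rcases g with k | k | i
  · by_contra hc
    simp only [deg, not_le] at hc
    have h1 : (1:ℤ) ≤ k := by omega
    rw [psiF, dif_pos h1] at h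
    exact h (psi_L_zero V ψ (by omega) _)
  · by_contra hc
    simp only [deg, not_le] at hc
    have h1 : (1:ℤ) ≤ k := by omega
    rw [psiF, dif_pos h1] at h
    exact h (psi_I_zero V ψ (by omega) _)
  · simp [deg]

section Mod
variable {W : Type} [AddCommGroup W] [Module ℂ W] [LieRingModule V W] [LieModule ℂ V W]

/-- The action of a single basis factor as a linear map. -/
noncomputable def lieOp (f : F) : W →ₗ[ℂ] W where
  toFun w := ⁅elt V f, w⁆
  map_add' a b := lie_add _ a b
  map_smul' c a := lie_smul c _ a

/-- The action of a word of basis factors. -/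
noncomputable def chain : List F → (W →ₗ[ℂ] W)
  | [] => LinearMap.id
  | f :: l => (lieOp V f).comp (chain l)

/-- The result of acting by a word on `wc`. -/
noncomputable def act (wc : W) (l : List F) : W := chain V l wc

@[simp] lemma act_nil (wc : W) : act V wc [] = wc := rfl
@[simp] lemma act_cons (wc : W) (f : F) (l : List F) :
    act V wc (f :: l) = ⁅elt V f, act V wc l⁆ := rfl

lemma act_append (wc : W) (l1 l2 : List F) :
    act V wc (l1 ++ l2) = chain V l1 (act V wc l2) := by
  induction l1 with
  | nil => rfl
  | cons f l ih => simp only [List.cons_append, act_cons, ih]; rfl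

lemma helper_lie_left (s : W) (T : Set V) (S : Submodule ℂ W)
    (h : ∀ x ∈ T, ⁅x, s⁆ ∈ S) : ∀ x ∈ Submodule.span ℂ T, ⁅x, s⁆ ∈ S := by
  intro x hx
  induction hx using Submodule.span_induction with
  | mem a ha => exact h a ha
  | zero => rw [zero_lie]; exact zero_mem _
  | add a b _ _ iha ihb => rw [add_lie]; exact add_mem iha ihb
  | smul c a _ iha => rw [smul_lie]; exact Submodule.smul_mem _ _ iha

lemma helper_lie_right (x : V) (T : Set W) (S : Submodule ℂ W)
    (h : ∀ w ∈ T, ⁅x, w⁆ ∈ S) : ∀ w ∈ Submodule.span ℂ T, ⁅x, w⁆ ∈ S := by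
  intro w hw
  induction hw using Submodule.span_induction with
  | mem a ha => exact h a ha
  | zero => rw [lie_zero]; exact zero_mem _
  | add a b _ _ iha ihb => rw [lie_add]; exact add_mem iha ihb
  | smul c a _ iha => rw [lie_smul]; exact Submodule.smul_mem _ _ iha

variable (ψ : nPlus V →ₗ⁅ℂ⁆ ℂ)

lemma lie_elt_wc (wc : W) (hwc : IsWhittakerVector V ψ wc) {g : F} (hg : 1 ≤ deg g) :
    ⁅elt V g, wc⁆ = psiF V ψ g • wc := by
  rcases g with k | k | i
  · have hk : (1:ℤ) ≤ k := hg
    rw [elt_inl]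
    simp only [psiF, dif_pos hk]
    exact hwc ⟨THV.L k, L_mem_nPlus V hk⟩
  · have hk : (1:ℤ) ≤ k := hg
    rw [elt_inrl]
    simp only [psiF, dif_pos hk]
    exact hwc ⟨THV.I k, I_mem_nPlus V hk⟩
  · exact absurd hg (by simp [deg])

/-- Key Lemma A: the dot action of a positive basis factor raises the degree. -/
lemma lemA (wc : W) (hwc : IsWhittakerVector V ψ wc) {g : F} (hg : 1 ≤ deg g) :
    ∀ l : List F, ⁅elt V g, act V wc l⁆ - psiF V ψ g • act V wc l ∈
      Submodule.span ℂ {w : W | ∃ m : List F,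
        m.length ≤ l.length ∧ degsum l + deg g ≤ degsum m ∧ w = act V wc m} := by
  intro l
  induction l with
  | nil =>
      rw [act_nil, lie_elt_wc V ψ wc hwc hg, sub_self]
      exact zero_mem _
  | cons f l ih =>
      have hsplit : ⁅elt V g, act V wc (f :: l)⁆ - psiF V ψ g • act V wc (f :: l)
          = ⁅⁅elt V g, elt V f⁆, act V wc l⁆
            + ⁅elt V f, ⁅elt V g, act V wc l⁆ - psiF V ψ g • act V wc l⁆ := by
        rw [act_cons, lie_sub, lie_smul, leibniz_lie]
        abel
      rw [hsplit]
      refine add_mem ?_ ?_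
      · refine helper_lie_left V (act V wc l) _ _ ?_ _ (lie_elt_elt V g f)
        rintro x ⟨h, hh, rfl⟩
        refine Submodule.subset_span ⟨h :: l, by simp, ?_, (act_cons V wc h l).symm⟩
        rw [degsum_cons, degsum_cons, hh]
        omega
      · refine helper_lie_right V (elt V f) _ _ ?_ _ ih
        rintro w ⟨m, hm1, hm2, rfl⟩
        refine Submodule.subset_span ⟨f :: m, by simpa using hm1, ?_, (act_cons V wc f m).symm⟩
        rw [degsum_cons, degsum_cons]
        omega

/-- Key Lemma R: every word, applied to `wc`, is a combination of nonpositive words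
of controlled length and degree. -/
lemma lemR (wc : W) (hwc : IsWhittakerVector V ψ wc) :
    ∀ n : ℕ, ∀ l : List F, l.length ≤ n →
      act V wc l ∈ Submodule.span ℂ {w : W | ∃ m : List F,
        m.length ≤ l.length ∧ (∀ f ∈ m, deg f ≤ 0) ∧
        degsum l - 2 * l.length ≤ degsum m ∧ w = act V wc m} := by
  intro n
  induction n with
  | zero =>
      intro l hl
      have hnil : l = [] := List.length_eq_zero_iff.mp (Nat.le_zero.mp hl)
      subst hnil
      exact Submodule.subset_span ⟨[], by simp, by simp, by simp, rfl⟩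
  | succ n ihn =>
      intro l hl
      rcases Classical.em (∀ f ∈ l, deg f ≤ 0) with hpos | hpos
      · exact Submodule.subset_span ⟨l, le_rfl, hpos, by omega, rfl⟩
      push_neg at hpos
      obtain ⟨g, hgl, hg0⟩ := hpos
      have hg : 1 ≤ deg g := by omega
      obtain ⟨l1, l2, rfl⟩ := List.append_of_mem hgl
      set l := l1 ++ g :: l2 with hldef
      have hlen : l.length = l1.length + l2.length + 1 := by simp [hldef]; omega
      have hds : degsum l = degsum l1 + deg g + degsum l2 := by
        simp [hldef]; ring
      have hdecomp : act V wc l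
          = chain V l1 (⁅elt V g, act V wc l2⁆ - psiF V ψ g • act V wc l2)
            + psiF V ψ g • act V wc (l1 ++ l2) := by
        rw [hldef, act_append, act_cons, map_sub, map_smul, act_append]
        abel
      rw [hdecomp]
      refine add_mem ?_ ?_
      · -- the commutator part
        have hd := lemA V ψ wc hwc hg l2
        -- push chain l1 through the span
        revert hd
        generalize (⁅elt V g, act V wc l2⁆ - psiF V ψ g • act V wc l2) = d
        intro hd
        induction hd using Submodule.span_induction with
        | zero => rw [map_zero]; exact zero_mem _
        | add a b _ _ iha ihb => rw [map_add]; exact add_mem iha ihb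
        | smul c a _ iha => rw [map_smul]; exact Submodule.smul_mem _ _ iha
        | mem a ha =>
            obtain ⟨m2, hm1, hm2, rfl⟩ := ha
            rw [← act_append]
            have hlen2 : (l1 ++ m2).length ≤ n := by
              simp only [List.length_append]
              omega
            refine Submodule.span_le.mpr ?_ (ihn (l1 ++ m2) hlen2)
            rintro w ⟨m, hma, hmb, hmc, rfl⟩
            refine Submodule.subset_span ⟨m, ?_, hmb, ?_, rfl⟩
            · simp only [List.length_append] at hma ⊢
              omega
            · simp only [degsum_append, List.length_append] at hmc ⊢
              omega
      · -- the scalar part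
        by_cases hz : psiF V ψ g = 0
        · rw [hz, zero_smul]; exact zero_mem _
        have hdg2 : deg g ≤ 2 := psiF_ne_zero_deg_le V ψ hz
        refine Submodule.smul_mem _ _ ?_
        have hlen2 : (l1 ++ l2).length ≤ n := by
          simp only [List.length_append]
          omega
        refine Submodule.span_le.mpr ?_ (ihn (l1 ++ l2) hlen2)
        rintro w ⟨m, hma, hmb, hmc, rfl⟩
        refine Submodule.subset_span ⟨m, ?_, hmb, ?_, rfl⟩
        · simp only [List.length_append] at hma ⊢
          omega
        · simp only [degsum_append, List.length_append] at hmc ⊢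
          omega

/-- The candidate invariant subspace. -/
noncomputable def Sspan (wc : W) (n : ℕ) (e : ℤ) : Submodule ℂ W :=
  Submodule.span ℂ {w : W | ∃ l : List F, l.length ≤ n ∧ e ≤ degsum l ∧ w = act V wc l}

lemma Sspan_mono (wc : W) {n n' : ℕ} {e e' : ℤ} (hn : n ≤ n') (he : e' ≤ e) :
    Sspan V wc n e ≤ Sspan V wc n' e' :=
  Submodule.span_mono (by rintro w ⟨l, h1, h2, rfl⟩; exact ⟨l, h1.trans hn, he.trans h2, rfl⟩)

lemma dot_gen (wc : W) (hwc : IsWhittakerVector V ψ wc) {g : F} (hg : 1 ≤ deg g)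
    {n : ℕ} {e : ℤ} : ∀ s ∈ Sspan V wc n e,
      ⁅elt V g, s⁆ - psiF V ψ g • s ∈ Sspan V wc n e := by
  intro s hs
  induction hs using Submodule.span_induction with
  | mem a ha =>
      obtain ⟨l, h1, h2, rfl⟩ := ha
      refine Submodule.span_le.mpr ?_ (lemA V ψ wc hwc hg l)
      rintro w ⟨m, hm1, hm2, rfl⟩
      exact Submodule.subset_span ⟨m, hm1.trans h1, by omega, rfl⟩
  | zero => simpa using zero_mem _
  | add a b _ _ iha ihb =>
      have he : ⁅elt V g, a + b⁆ - psiF V ψ g • (a + b)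
          = (⁅elt V g, a⁆ - psiF V ψ g • a) + (⁅elt V g, b⁆ - psiF V ψ g • b) := by
        rw [lie_add, smul_add]; abel
      rw [he]; exact add_mem iha ihb
  | smul c a _ iha =>
      have he : ⁅elt V g, c • a⁆ - psiF V ψ g • (c • a)
          = c • (⁅elt V g, a⁆ - psiF V ψ g • a) := by
        rw [lie_smul, smul_sub, smul_comm]
      rw [he]; exact Submodule.smul_mem _ _ iha

lemma dot_closed (wc : W) (hwc : IsWhittakerVector V ψ wc) {n : ℕ} {e : ℤ}
    (x : nPlus V) : ∀ s ∈ Sspan V wc n e,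
      ⁅(x : V), s⁆ - ψ x • s ∈ Sspan V wc n e := by
  obtain ⟨y, hy⟩ := x
  have hspan : y ∈ Submodule.span ℂ (PG V) := nPlus_le_spanPG V y hy
  revert hy
  induction hspan using Submodule.span_induction with
  | mem a ha =>
      obtain ⟨k, hk, rfl | rfl⟩ := ha
      · intro hy s hs
        have hpsi : ψ ⟨THV.L k, hy⟩ = psiF V ψ (Sum.inl k) := by
          simp only [psiF, dif_pos hk]
        show ⁅THV.L k, s⁆ - ψ ⟨THV.L k, hy⟩ • s ∈ Sspan V wc n e
        rw [hpsi, ← elt_inl V k]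
        exact dot_gen V ψ wc hwc (g := Sum.inl k) hk s hs
      · intro hy s hs
        have hpsi : ψ ⟨THV.I k, hy⟩ = psiF V ψ (Sum.inr (Sum.inl k)) := by
          simp only [psiF, dif_pos hk]
        show ⁅THV.I k, s⁆ - ψ ⟨THV.I k, hy⟩ • s ∈ Sspan V wc n e
        rw [hpsi, ← elt_inrl V k]
        exact dot_gen V ψ wc hwc (g := Sum.inr (Sum.inl k)) hk s hs
  | zero =>
      intro hy s hs
      have h0 : (⟨(0 : V), hy⟩ : nPlus V) = 0 := by
        apply Subtype.ext; simp
      show ⁅(0 : V), s⁆ - ψ ⟨(0 : V), hy⟩ • s ∈ Sspan V wc n e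
      rw [h0, map_zero, zero_smul, zero_lie, sub_zero]
      exact zero_mem _
  | add a b ha' hb' iha ihb =>
      intro hy s hs
      have haN : a ∈ nPlus V := spanPG_le_nPlus V a ha'
      have hbN : b ∈ nPlus V := spanPG_le_nPlus V b hb'
      have hsum : (⟨a + b, hy⟩ : nPlus V) = ⟨a, haN⟩ + ⟨b, hbN⟩ := by
        apply Subtype.ext; simp
      show ⁅a + b, s⁆ - ψ ⟨a + b, hy⟩ • s ∈ Sspan V wc n e
      have he : ⁅a + b, s⁆ - ψ ⟨a + b, hy⟩ • s
          = (⁅a, s⁆ - ψ ⟨a, haN⟩ • s) + (⁅b, s⁆ - ψ ⟨b, hbN⟩ • s) := by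
        rw [hsum, map_add, add_lie, add_smul]; abel
      rw [he]
      exact add_mem (iha haN s hs) (ihb hbN s hs)
  | smul c a ha' iha =>
      intro hy s hs
      have haN : a ∈ nPlus V := spanPG_le_nPlus V a ha'
      have hsm : (⟨c • a, hy⟩ : nPlus V) = c • ⟨a, haN⟩ := by
        apply Subtype.ext; rfl
      show ⁅c • a, s⁆ - ψ ⟨c • a, hy⟩ • s ∈ Sspan V wc n e
      have he : ⁅c • a, s⁆ - ψ ⟨c • a, hy⟩ • s
          = c • (⁅a, s⁆ - ψ ⟨a, haN⟩ • s) := by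
        rw [hsm, map_smul, smul_lie, smul_sub, smul_eq_mul, mul_smul]
      rw [he]
      exact Submodule.smul_mem _ _ (iha haN s hs)

/-- The span of all words applied to `wc`. -/
noncomputable def Tsub (wc : W) : Submodule ℂ W :=
  Submodule.span ℂ (Set.range (act V wc))

lemma lie_mem_Tsub (wc : W) (x : V) : ∀ m ∈ Tsub V wc, ⁅x, m⁆ ∈ Tsub V wc := by
  intro m hm
  have hx : x ∈ Submodule.span ℂ (Set.range ⇑(THV.basis (V := V))) := by
    rw [Module.Basis.span_eq]; trivial
  refine helper_lie_left V m _ _ ?_ x hx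
  rintro y ⟨f, rfl⟩
  refine helper_lie_right V (THV.basis f) _ _ ?_ m hm
  rintro w ⟨l, rfl⟩
  exact Submodule.subset_span ⟨f :: l, rfl⟩

/-- `Tsub` as a Lie submodule. -/
noncomputable def TsubL (wc : W) : LieSubmodule ℂ V W :=
  { Tsub V wc with lie_mem := fun {x m} hm => lie_mem_Tsub V wc x m hm }

lemma exists_Sspan (wc : W) (v : W) (hv : v ∈ Tsub V wc) :
    ∃ (n : ℕ) (e : ℤ), v ∈ Sspan V wc n e := by
  induction hv using Submodule.span_induction with
  | mem a ha =>
      obtain ⟨l, rfl⟩ := ha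
      exact ⟨l.length, degsum l, Submodule.subset_span ⟨l, le_rfl, le_rfl, rfl⟩⟩
  | zero => exact ⟨0, 0, zero_mem _⟩
  | add a b _ _ iha ihb =>
      obtain ⟨n1, e1, h1⟩ := iha
      obtain ⟨n2, e2, h2⟩ := ihb
      exact ⟨max n1 n2, min e1 e2,
        add_mem (Sspan_mono V wc (le_max_left _ _) (min_le_left _ _) h1)
          (Sspan_mono V wc (le_max_right _ _) (min_le_right _ _) h2)⟩
  | smul c a _ iha =>
      obtain ⟨n1, e1, h1⟩ := iha
      exact ⟨n1, e1, Submodule.smul_mem _ _ h1⟩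

lemma degsum_nonpos {m : List F} (h : ∀ f ∈ m, deg f ≤ 0) : degsum m ≤ 0 := by
  induction m with
  | nil => simp
  | cons g m ih =>
      have h1 := h g (by simp)
      have h2 := ih fun f hf => h f (by simp [hf])
      simp only [degsum_cons]; omega

lemma le_deg_of_mem {m : List F} (h : ∀ f ∈ m, deg f ≤ 0) {f : F} (hf : f ∈ m) :
    degsum m ≤ deg f := by
  obtain ⟨m1, m2, rfl⟩ := List.append_of_mem hf
  have h1 : degsum m1 ≤ 0 := degsum_nonpos fun x hx => h x (by simp [hx])
  have h2 : degsum m2 ≤ 0 := degsum_nonpos fun x hx => h x (by simp [hx])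
  simp only [degsum_append, degsum_cons]; omega

lemma finite_A (e' : ℤ) : {f : F | e' ≤ deg f ∧ deg f ≤ 0}.Finite := by
  have hsub : {f : F | e' ≤ deg f ∧ deg f ≤ 0} ⊆
      (Sum.inl '' Set.Icc e' 0) ∪
        (Sum.inr '' ((Sum.inl '' Set.Icc e' 0) ∪ (Sum.inr '' (Set.univ : Set (Fin 3))))) := by
    rintro (k | k | i) ⟨h1, h2⟩
    · exact Or.inl ⟨k, ⟨h1, h2⟩, rfl⟩
    · exact Or.inr ⟨Sum.inl k, Or.inl ⟨k, ⟨h1, h2⟩, rfl⟩, rfl⟩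
    · exact Or.inr ⟨Sum.inr i, Or.inr ⟨i, trivial, rfl⟩, rfl⟩
  exact Set.Finite.subset
    (Set.Finite.union ((Set.finite_Icc e' 0).image _)
      (Set.Finite.image _ (Set.Finite.union ((Set.finite_Icc e' 0).image _)
        (Set.finite_univ.image _)))) hsub

lemma finite_lists {α : Type} {A : Set α} (hA : A.Finite) (n : ℕ) :
    {l : List α | l.length ≤ n ∧ ∀ f ∈ l, f ∈ A}.Finite := by
  haveI := hA.to_subtype
  refine ((List.finite_length_le ↥A n).image (List.map Subtype.val)).subset ?_
  rintro l ⟨hl, hmem⟩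
  refine ⟨l.attach.map (fun x => (⟨x.1, hmem x.1 x.2⟩ : ↥A)), ?_, ?_⟩
  · simpa using hl
  · simp [List.map_map]

end Mod
end WhitAux


open THV in
/-- under the dot action, the `𝔫⁺`-submodule generated by any vector of a
Whittaker module is finite dimensional. -/
theorem dot_action_submodule_finiteDimensional
    (V : Type) [LieRing V] [LieAlgebra ℂ V] [THV V]
    (ψ : nPlus V →ₗ⁅ℂ⁆ ℂ)
    (hL1 : ψ ⟨THV.L 1, L_mem_nPlus V le_rfl⟩ ≠ 0)
    (hL2 : ψ ⟨THV.L 2, L_mem_nPlus V one_le_two⟩ ≠ 0)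
    (hI1 : ψ ⟨THV.I 1, I_mem_nPlus V le_rfl⟩ ≠ 0)
    (W : Type) [AddCommGroup W] [Module ℂ W] [LieRingModule V W] [LieModule ℂ V W]
    (wc : W) (hwc : IsWhittakerVector V ψ wc)
    (hgen : LieSubmodule.lieSpan ℂ V {wc} = ⊤)
    (v : W) :
    FiniteDimensional ℂ
      ↥(sInf {S : Submodule ℂ W | v ∈ S ∧
          ∀ x : nPlus V, ∀ s ∈ S, ⁅(x : V), s⁆ - ψ x • s ∈ S}) := by
  classical
  have hvT : v ∈ WhitAux.Tsub V wc := by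
    have hle : LieSubmodule.lieSpan ℂ V {wc} ≤ WhitAux.TsubL V wc := by
      rw [LieSubmodule.lieSpan_le]
      intro x hx
      rw [Set.mem_singleton_iff] at hx
      subst hx
      exact Submodule.subset_span ⟨[], rfl⟩
    rw [hgen] at hle
    exact hle (LieSubmodule.mem_top v)
  obtain ⟨n, e, hv⟩ := WhitAux.exists_Sspan V wc v hvT
  have hmem : WhitAux.Sspan V wc n e ∈ {S : Submodule ℂ W | v ∈ S ∧
      ∀ x : nPlus V, ∀ s ∈ S, ⁅(x : V), s⁆ - ψ x • s ∈ S} :=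
    ⟨hv, fun x s hs => WhitAux.dot_closed V ψ wc hwc x s hs⟩
  let myA : Set WhitAux.F := {f | e - 2 * n ≤ WhitAux.deg f ∧ WhitAux.deg f ≤ 0}
  let myGL : Set (List WhitAux.F) := {l | l.length ≤ n ∧ ∀ f ∈ l, f ∈ myA}
  have h2 : WhitAux.Sspan V wc n e ≤ Submodule.span ℂ (WhitAux.act V wc '' myGL) := by
    rw [WhitAux.Sspan, Submodule.span_le]
    rintro w ⟨l, hl1, hl2, rfl⟩
    refine Submodule.span_le.mpr ?_ (WhitAux.lemR V ψ wc hwc n l hl1)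
    rintro w ⟨m, hm1, hm2, hm3, rfl⟩
    refine Submodule.subset_span ⟨m, ⟨hm1.trans hl1, ?_⟩, rfl⟩
    intro f hf
    have h4 := WhitAux.le_deg_of_mem hm2 hf
    exact ⟨by omega, hm2 f hf⟩
  haveI : FiniteDimensional ℂ (Submodule.span ℂ (WhitAux.act V wc '' myGL)) :=
    FiniteDimensional.span_of_finite ℂ
      ((WhitAux.finite_lists (WhitAux.finite_A (e - 2 * n)) n).image _)
  exact Submodule.finiteDimensional_of_le (le_trans (sInf_le hmem) h2)
end

section
/- Let ψ : 𝔫⁺ → ℂ be a Lie algebra homomorphism with ψ(L_1) ≠ 0, ψ(L_2) ≠ 0, ψ(I_1) ≠ 0, let V be a Whittaker module of type ψ for 𝒱, and let S ⊆ V be a nonzero 𝒱-submodule. Then S contains a nonzero Whittaker vector of type ψ. -/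
/-!
Common setup: the twisted Heisenberg–Virasoro algebra `𝒱`, its subalgebra `𝔫⁺`,
the universal Whittaker module `M_ψ`, the quotients `L_{ψ,ξ}`, and the notions of
Whittaker vectors/modules, degrees, etc.
-/

open UniversalEnvelopingAlgebra

attribute [local instance 100] LieRing.ofAssociativeRing

-- ==================== auxiliary development ====================
namespace TW13
open THV

inductive Letter where
  | Ln : ℕ → Letter
  | In : ℕ → Letter
  | Zl : Fin 3 → Letter

def Letter.toV (V : Type) [LieRing V] [LieAlgebra ℂ V] [THV V] : Letter → V
  | .Ln n => L (-(n : ℤ))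
  | .In n => I (-(n : ℤ))
  | .Zl i => z i

def Letter.wt : Letter → ℕ
  | .Ln n => n
  | .In n => n
  | .Zl _ => 0

def Letter.cnt : Letter → ℕ
  | .Ln 0 => 1
  | _ => 0

def wts (l : List Letter) : ℕ := (l.map Letter.wt).sum
def cnts (l : List Letter) : ℕ := (l.map Letter.cnt).sum

def mu (l : List Letter) : ℕ ×ₗ ℕ := toLex (wts l, cnts l)

lemma lex_lt {a b c d : ℕ} : toLex (a, b) < toLex (c, d) ↔ a < c ∨ (a = c ∧ b < d) :=
  Prod.Lex.lt_iff

lemma lex_le {a b c d : ℕ} : toLex (a, b) ≤ toLex (c, d) ↔ a < c ∨ (a = c ∧ b ≤ d) :=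
  Prod.Lex.le_iff

lemma mu_cons (a : Letter) (l : List Letter) :
    mu (a :: l) = toLex (a.wt + wts l, a.cnt + cnts l) := rfl

lemma mu_cons_lt_of_letter {b a : Letter} (l : List Letter)
    (h : toLex (b.wt, b.cnt) < toLex (a.wt, a.cnt)) : mu (b :: l) < mu (a :: l) := by
  rw [mu_cons, mu_cons, lex_lt]
  rw [lex_lt] at h
  omega

lemma mu_def (l : List Letter) : mu l = toLex (wts l, cnts l) := rfl

lemma mu_lt_cons {a : Letter} (l : List Letter)
    (h : toLex ((0:ℕ), (0:ℕ)) < toLex (a.wt, a.cnt)) : mu l < mu (a :: l) := by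
  rw [mu_cons, mu_def, lex_lt]
  rw [lex_lt] at h
  omega

lemma mu_cons_mono {l₁ l₂ : List Letter} (a : Letter) (h : mu l₁ < mu l₂) :
    mu (a :: l₁) < mu (a :: l₂) := by
  rw [mu_cons, mu_cons, lex_lt]
  rw [mu_def, mu_def, lex_lt] at h
  omega

set_option linter.unusedSectionVars false

variable (V : Type) [LieRing V] [LieAlgebra ℂ V] [THV V]
variable {W : Type} [AddCommGroup W] [Module ℂ W] [LieRingModule V W] [LieModule ℂ V W]

def act (wc : W) (l : List Letter) : W :=
  l.foldr (fun a w => ⁅Letter.toV V a, w⁆) wc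

lemma act_nil (wc : W) : act V wc [] = wc := rfl

lemma act_cons (wc : W) (a : Letter) (l : List Letter) :
    act V wc (a :: l) = ⁅Letter.toV V a, act V wc l⁆ := rfl

def G (wc : W) (p : ℕ ×ₗ ℕ) : Submodule ℂ W :=
  Submodule.span ℂ {v | ∃ l : List Letter, mu l ≤ p ∧ v = act V wc l}

def G' (wc : W) (p : ℕ ×ₗ ℕ) : Submodule ℂ W :=
  Submodule.span ℂ {v | ∃ l : List Letter, mu l < p ∧ v = act V wc l}

lemma G_mono (wc : W) {p q : ℕ ×ₗ ℕ} (h : p ≤ q) : G V wc p ≤ G V wc q :=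
  Submodule.span_mono fun _ ⟨l, hl, hv⟩ => ⟨l, hl.trans h, hv⟩

lemma G'_mono (wc : W) {p q : ℕ ×ₗ ℕ} (h : p ≤ q) : G' V wc p ≤ G' V wc q :=
  Submodule.span_mono fun _ ⟨l, hl, hv⟩ => ⟨l, lt_of_lt_of_le hl h, hv⟩

lemma G'_le_G (wc : W) (p : ℕ ×ₗ ℕ) : G' V wc p ≤ G V wc p :=
  Submodule.span_mono fun _ ⟨l, hl, hv⟩ => ⟨l, hl.le, hv⟩

lemma act_mem_G (wc : W) {l : List Letter} {p : ℕ ×ₗ ℕ} (h : mu l ≤ p) :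
    act V wc l ∈ G V wc p :=
  Submodule.subset_span ⟨l, h, rfl⟩

lemma act_mem_G' (wc : W) {l : List Letter} {p : ℕ ×ₗ ℕ} (h : mu l < p) :
    act V wc l ∈ G' V wc p :=
  Submodule.subset_span ⟨l, h, rfl⟩

/-- membership in `G'` yields membership in some strictly smaller `G`. -/
lemma mem_G'_cases (wc : W) {p : ℕ ×ₗ ℕ} {v : W} (hv : v ∈ G' V wc p) :
    v = 0 ∨ ∃ q, q < p ∧ v ∈ G V wc q := by
  refine Submodule.span_induction ?_ ?_ ?_ ?_ hv
  · rintro x ⟨l, hl, rfl⟩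
    exact Or.inr ⟨mu l, hl, act_mem_G V wc le_rfl⟩
  · exact Or.inl rfl
  · rintro x y _ _ (rfl | ⟨q₁, hq₁, hx⟩) hy
    · simpa using hy
    rcases hy with rfl | ⟨q₂, hq₂, hy⟩
    · exact Or.inr ⟨q₁, hq₁, by simpa using hx⟩
    · exact Or.inr ⟨max q₁ q₂, max_lt hq₁ hq₂,
        Submodule.add_mem _ (G_mono V wc (le_max_left _ _) hx) (G_mono V wc (le_max_right _ _) hy)⟩
  · rintro c x _ (rfl | ⟨q, hq, hx⟩)
    · simp
    · exact Or.inr ⟨q, hq, Submodule.smul_mem _ c hx⟩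

/-- bracketing with a letter raises the filtration accordingly. -/
lemma lie_act_G' (wc : W) (a : Letter) {l : List Letter} {v : W}
    (hv : v ∈ G' V wc (mu l)) :
    ⁅Letter.toV V a, v⁆ ∈ G' V wc (mu (a :: l)) := by
  refine Submodule.span_induction ?_ ?_ ?_ ?_ hv
  · rintro x ⟨l', hl', rfl⟩
    rw [← act_cons]
    exact act_mem_G' V wc (mu_cons_mono a hl')
  · simp
  · intro x y _ _ hx hy
    rw [lie_add]; exact Submodule.add_mem _ hx hy
  · intro c x _ hx
    rw [lie_smul]; exact Submodule.smul_mem _ c hx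

lemma pos_Ln (n : ℕ) :
    toLex ((0:ℕ), (0:ℕ)) < toLex ((Letter.Ln n).wt, (Letter.Ln n).cnt) := by
  rcases n with _ | m <;> rw [lex_lt] <;> simp [Letter.wt, Letter.cnt]

lemma pos_In (n : ℕ) (h : n ≠ 0) :
    toLex ((0:ℕ), (0:ℕ)) < toLex ((Letter.In n).wt, (Letter.In n).cnt) := by
  rw [lex_lt]; simp [Letter.wt]; omega

section Key

variable (ψ : nPlus V →ₗ⁅ℂ⁆ ℂ) (wc : W) (hwc : IsWhittakerVector V ψ wc)

lemma expand (g : V) (c : ℂ) (a : Letter) (l' : List Letter) :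
    ⁅g, act V wc (a :: l')⁆ - c • act V wc (a :: l') =
      ⁅⁅g, Letter.toV V a⁆, act V wc l'⁆ +
        ⁅Letter.toV V a, ⁅g, act V wc l'⁆ - c • act V wc l'⁆ := by
  rw [act_cons, leibniz_lie, lie_sub, lie_smul]
  abel

lemma letter_term (c : ℂ) (b a : Letter) (l' : List Letter)
    (h : toLex (b.wt, b.cnt) < toLex (a.wt, a.cnt)) :
    c • ⁅Letter.toV V b, act V wc l'⁆ ∈ G' V wc (mu (a :: l')) :=
  Submodule.smul_mem _ c
    (by rw [← act_cons]; exact act_mem_G' V wc (mu_cons_lt_of_letter l' h))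

lemma gen_term (c cg : ℂ) (g : V) (a : Letter) (l' : List Letter)
    (hIH : ⁅g, act V wc l'⁆ - cg • act V wc l' ∈ G' V wc (mu l'))
    (hpos : toLex ((0:ℕ), (0:ℕ)) < toLex (a.wt, a.cnt)) :
    c • ⁅g, act V wc l'⁆ ∈ G' V wc (mu (a :: l')) := by
  have h1 : mu l' < mu (a :: l') := mu_lt_cons l' hpos
  have e : ⁅g, act V wc l'⁆ =
      (⁅g, act V wc l'⁆ - cg • act V wc l') + cg • act V wc l' := by abel
  rw [e]
  exact Submodule.smul_mem _ c (Submodule.add_mem _ (G'_mono V wc h1.le hIH)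
    (Submodule.smul_mem _ cg (act_mem_G' V wc h1)))

include hwc in
lemma key : ∀ (l : List Letter) (j : ℤ) (hj : 1 ≤ j),
    (⁅(L j : V), act V wc l⁆ - ψ ⟨L j, L_mem_nPlus V hj⟩ • act V wc l ∈ G' V wc (mu l)) ∧
    (⁅(I j : V), act V wc l⁆ - ψ ⟨I j, I_mem_nPlus V hj⟩ • act V wc l ∈ G' V wc (mu l)) := by
  intro l
  induction l with
  | nil =>
    intro j hj
    constructor
    · have h := hwc ⟨L j, L_mem_nPlus V hj⟩
      rw [show ((⟨L j, L_mem_nPlus V hj⟩ : nPlus V) : V) = L j from rfl] at h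
      rw [act_nil, h, sub_self]; exact zero_mem _
    · have h := hwc ⟨I j, I_mem_nPlus V hj⟩
      rw [show ((⟨I j, I_mem_nPlus V hj⟩ : nPlus V) : V) = I j from rfl] at h
      rw [act_nil, h, sub_self]; exact zero_mem _
  | cons a l' ih =>
    intro j hj
    constructor
    · -- g = L j
      rw [expand V wc (L j) _ a l']
      refine Submodule.add_mem _ ?_ (lie_act_G' V wc a ((ih j hj).1))
      cases a with
      | Zl i =>
        have hz : ⁅(L j : V), Letter.toV V (.Zl i)⁆ = 0 := by
          rw [show Letter.toV V (.Zl i) = z i from rfl, ← lie_skew, lie_z, neg_zero]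
        rw [hz, zero_lie]; exact zero_mem _
      | Ln n =>
        rw [show Letter.toV V (.Ln n) = L (-(n:ℤ)) from rfl, lie_LL j (-(n:ℤ)),
          add_lie, smul_lie, smul_lie]
        refine Submodule.add_mem _ ?_ ?_
        · rcases le_or_gt j (n : ℤ) with hle | hlt
          · have e : (L (j + -(n:ℤ)) : V) = Letter.toV V (.Ln ((n:ℤ) - j).toNat) := by
              show _ = L (-((((n:ℤ) - j).toNat : ℕ) : ℤ)); congr 1; omega
            rw [e]
            refine letter_term V wc _ _ _ _ ?_
            rw [lex_lt]; left
            show (((n:ℤ) - j).toNat) < (Letter.Ln n).wt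
            show (((n:ℤ) - j).toNat) < n
            omega
          · have hj' : 1 ≤ j + -(n:ℤ) := by omega
            exact gen_term V wc _ (ψ ⟨L (j + -(n:ℤ)), L_mem_nPlus V hj'⟩) _ _ _
              ((ih _ hj').1) (pos_Ln n)
        · rw [show (z 0 : V) = Letter.toV V (.Zl 0) from rfl]
          exact letter_term V wc _ _ _ _ (pos_Ln n)
      | In n =>
        rw [show Letter.toV V (.In n) = I (-(n:ℤ)) from rfl, lie_LI j (-(n:ℤ)),
          add_lie, smul_lie, smul_lie]
        rcases Nat.eq_zero_or_pos n with rfl | hn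
        · have c1 : ((-(0:ℕ) : ℤ) : ℂ) = 0 := by norm_num
          have c2 : (if (-(0:ℕ):ℤ) = -j then (j:ℂ)^2 - (j:ℂ) else 0) = 0 := by
            rw [if_neg]; omega
          rw [c1, c2, zero_smul, zero_smul, add_zero]; exact zero_mem _
        · refine Submodule.add_mem _ ?_ ?_
          · rcases le_or_gt j (n : ℤ) with hle | hlt
            · have e : (I (j + -(n:ℤ)) : V) = Letter.toV V (.In ((n:ℤ) - j).toNat) := by
                show _ = I (-((((n:ℤ) - j).toNat : ℕ) : ℤ)); congr 1; omega
              rw [e]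
              refine letter_term V wc _ _ _ _ ?_
              rw [lex_lt]; left
              show (((n:ℤ) - j).toNat) < (Letter.In n).wt
              show (((n:ℤ) - j).toNat) < n
              omega
            · have hj' : 1 ≤ j + -(n:ℤ) := by omega
              exact gen_term V wc _ (ψ ⟨I (j + -(n:ℤ)), I_mem_nPlus V hj'⟩) _ _ _
                ((ih _ hj').2) (pos_In n (by omega))
          · rw [show (z 1 : V) = Letter.toV V (.Zl 1) from rfl]
            exact letter_term V wc _ _ _ _ (pos_In n (by omega))
    · -- g = I j
      rw [expand V wc (I j) _ a l']
      refine Submodule.add_mem _ ?_ (lie_act_G' V wc a ((ih j hj).2))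
      cases a with
      | Zl i =>
        have hz : ⁅(I j : V), Letter.toV V (.Zl i)⁆ = 0 := by
          rw [show Letter.toV V (.Zl i) = z i from rfl, ← lie_skew, lie_z, neg_zero]
        rw [hz, zero_lie]; exact zero_mem _
      | Ln n =>
        have hb : ⁅(I j : V), Letter.toV V (.Ln n)⁆ =
            -((j:ℂ) • I (-(n:ℤ) + j) +
              (if j = -(-(n:ℤ)) then (Int.cast (-(n:ℤ)) : ℂ)^2 - (Int.cast (-(n:ℤ)) : ℂ) else 0) • z 1) := by
          rw [show Letter.toV V (.Ln n) = L (-(n:ℤ)) from rfl, ← lie_skew, lie_LI (-(n:ℤ)) j]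
        rw [hb, neg_lie, add_lie, smul_lie, smul_lie]
        refine Submodule.neg_mem _ (Submodule.add_mem _ ?_ ?_)
        · rcases le_or_gt j (n : ℤ) with hle | hlt
          · have e : (I (-(n:ℤ) + j) : V) = Letter.toV V (.In ((n:ℤ) - j).toNat) := by
              show _ = I (-((((n:ℤ) - j).toNat : ℕ) : ℤ)); congr 1; omega
            rw [e]
            refine letter_term V wc _ _ _ _ ?_
            rw [lex_lt]
            show _ < n ∨ _
            have : (((n:ℤ) - j).toNat) < n := by omega
            simp [Letter.wt, Letter.cnt, this]
          · have hj' : 1 ≤ -(n:ℤ) + j := by omega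
            exact gen_term V wc _ (ψ ⟨I (-(n:ℤ) + j), I_mem_nPlus V hj'⟩) _ _ _
              ((ih _ hj').2) (pos_Ln n)
        · rw [show (z 1 : V) = Letter.toV V (.Zl 1) from rfl]
          exact letter_term V wc _ _ _ _ (pos_Ln n)
      | In n =>
        rw [show Letter.toV V (.In n) = I (-(n:ℤ)) from rfl, lie_II j (-(n:ℤ)), smul_lie]
        rcases Nat.eq_zero_or_pos n with rfl | hn
        · rw [if_neg (by omega), zero_smul]; exact zero_mem _
        · rw [show (z 2 : V) = Letter.toV V (.Zl 2) from rfl]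
          exact letter_term V wc _ _ _ _ (pos_In n (by omega))

end Key

section Span

variable (ψ : nPlus V →ₗ⁅ℂ⁆ ℂ) (wc : W) (hwc : IsWhittakerVector V ψ wc)

def U0 : Submodule ℂ W := Submodule.span ℂ {v | ∃ l : List Letter, v = act V wc l}

lemma G_le_U0 (p : ℕ ×ₗ ℕ) : G V wc p ≤ U0 V wc :=
  Submodule.span_mono fun _ ⟨l, _, hv⟩ => ⟨l, hv⟩

lemma G'_le_U0 (p : ℕ ×ₗ ℕ) : G' V wc p ≤ U0 V wc :=
  Submodule.span_mono fun _ ⟨l, _, hv⟩ => ⟨l, hv⟩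

lemma act_mem_U0 (l : List Letter) : act V wc l ∈ U0 V wc :=
  Submodule.subset_span ⟨l, rfl⟩

include hwc in
lemma lie_act_U0 (l : List Letter) (x : V) : ⁅x, act V wc l⁆ ∈ U0 V wc := by
  let T : Submodule ℂ V :=
    { carrier := {y | ⁅y, act V wc l⁆ ∈ U0 V wc}
      add_mem' := fun hu hv => by
        simp only [Set.mem_setOf_eq] at *
        rw [add_lie]; exact Submodule.add_mem _ hu hv
      zero_mem' := by
        simp only [Set.mem_setOf_eq]
        rw [zero_lie]; exact zero_mem _
      smul_mem' := fun c y hy => by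
        simp only [Set.mem_setOf_eq] at *
        rw [smul_lie]; exact Submodule.smul_mem _ c hy }
  have hT : Set.range (basis (V := V)) ⊆ T := by
    rintro y ⟨i, rfl⟩
    rcases i with k | k | i
    · rw [basis_L]
      show ⁅(L k : V), act V wc l⁆ ∈ U0 V wc
      rcases le_or_gt k 0 with hk | hk
      · have e : (L k : V) = Letter.toV V (.Ln (-k).toNat) := by
          show _ = L (-(((-k).toNat : ℕ) : ℤ)); congr 1; omega
        rw [e, ← act_cons]; exact act_mem_U0 V wc _
      · have h := (key V ψ wc hwc l k hk).1
        have e : ⁅(L k : V), act V wc l⁆ =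
            (⁅(L k : V), act V wc l⁆ - ψ ⟨L k, L_mem_nPlus V hk⟩ • act V wc l) +
              ψ ⟨L k, L_mem_nPlus V hk⟩ • act V wc l := by abel
        rw [e]
        exact Submodule.add_mem _ (G'_le_U0 V wc _ h)
          (Submodule.smul_mem _ _ (act_mem_U0 V wc l))
    · rw [basis_I]
      show ⁅(I k : V), act V wc l⁆ ∈ U0 V wc
      rcases le_or_gt k 0 with hk | hk
      · have e : (I k : V) = Letter.toV V (.In (-k).toNat) := by
          show _ = I (-(((-k).toNat : ℕ) : ℤ)); congr 1; omega
        rw [e, ← act_cons]; exact act_mem_U0 V wc _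
      · have h := (key V ψ wc hwc l k hk).2
        have e : ⁅(I k : V), act V wc l⁆ =
            (⁅(I k : V), act V wc l⁆ - ψ ⟨I k, I_mem_nPlus V hk⟩ • act V wc l) +
              ψ ⟨I k, I_mem_nPlus V hk⟩ • act V wc l := by abel
        rw [e]
        exact Submodule.add_mem _ (G'_le_U0 V wc _ h)
          (Submodule.smul_mem _ _ (act_mem_U0 V wc l))
    · rw [basis_z]
      show ⁅(z i : V), act V wc l⁆ ∈ U0 V wc
      rw [show (z i : V) = Letter.toV V (.Zl i) from rfl, ← act_cons]
      exact act_mem_U0 V wc _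
  have hx : x ∈ Submodule.span ℂ (Set.range (basis (V := V))) := by
    rw [Module.Basis.span_eq]; trivial
  exact Submodule.span_le.mpr hT hx

include hwc in
lemma lie_U0 (x : V) {v : W} (hv : v ∈ U0 V wc) : ⁅x, v⁆ ∈ U0 V wc := by
  refine Submodule.span_induction ?_ ?_ ?_ ?_ hv
  · rintro y ⟨l, rfl⟩; exact lie_act_U0 V ψ wc hwc l x
  · rw [lie_zero]; exact zero_mem _
  · intro u v _ _ hu hv; rw [lie_add]; exact Submodule.add_mem _ hu hv
  · intro c u _ hu; rw [lie_smul]; exact Submodule.smul_mem _ c hu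

include hwc in
lemma mem_U0_of_gen (hgen : LieSubmodule.lieSpan ℂ V {wc} = ⊤) (v : W) : v ∈ U0 V wc := by
  let N : LieSubmodule ℂ V W :=
    { toSubmodule := U0 V wc
      lie_mem := fun {x m} hm => lie_U0 V ψ wc hwc x hm }
  have h1 : LieSubmodule.lieSpan ℂ V {wc} ≤ N := by
    rw [LieSubmodule.lieSpan_le]
    intro y hy
    rw [Set.mem_singleton_iff] at hy
    subst hy
    exact act_mem_U0 V y []
  rw [hgen] at h1
  exact h1 (LieSubmodule.mem_top v)

lemma exists_G_of_U0 {v : W} (hv : v ∈ U0 V wc) : ∃ p, v ∈ G V wc p := by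
  refine Submodule.span_induction ?_ ?_ ?_ ?_ hv
  · rintro y ⟨l, rfl⟩; exact ⟨mu l, act_mem_G V wc le_rfl⟩
  · exact ⟨toLex (0, 0), zero_mem _⟩
  · rintro u v _ _ ⟨p, hp⟩ ⟨q, hq⟩
    exact ⟨max p q, Submodule.add_mem _ (G_mono V wc (le_max_left _ _) hp)
      (G_mono V wc (le_max_right _ _) hq)⟩
  · rintro c u _ ⟨p, hp⟩; exact ⟨p, Submodule.smul_mem _ c hp⟩

end Span

/-! the linear span of the generators of `𝔫⁺` -/

def S0 : Set V := {x | ∃ k : ℤ, 1 ≤ k ∧ (x = L k ∨ x = I k)}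

lemma lie_S0_S0 {u v : V} (hu : u ∈ S0 V) (hv : v ∈ S0 V) :
    ⁅u, v⁆ ∈ Submodule.span ℂ (S0 V) := by
  obtain ⟨k, hk, hu⟩ := hu; obtain ⟨j, hj, hv⟩ := hv
  have hij : ¬(j = -k) := by omega
  rcases hu with rfl | rfl <;> rcases hv with rfl | rfl
  · rw [lie_LL, if_neg hij, zero_smul, add_zero]
    exact Submodule.smul_mem _ _ (Submodule.subset_span ⟨k + j, by omega, Or.inl rfl⟩)
  · rw [lie_LI, if_neg hij, zero_smul, add_zero]
    exact Submodule.smul_mem _ _ (Submodule.subset_span ⟨k + j, by omega, Or.inr rfl⟩)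
  · rw [← lie_skew, lie_LI, if_neg (show ¬(k = -j) by omega), zero_smul, add_zero]
    exact Submodule.neg_mem _
      (Submodule.smul_mem _ _ (Submodule.subset_span ⟨j + k, by omega, Or.inr rfl⟩))
  · rw [lie_II, if_neg hij, zero_smul]; exact zero_mem _

lemma lie_span_S0 {u v : V} (hu : u ∈ Submodule.span ℂ (S0 V))
    (hv : v ∈ Submodule.span ℂ (S0 V)) : ⁅u, v⁆ ∈ Submodule.span ℂ (S0 V) := by
  induction hu using Submodule.span_induction with
  | mem x hx =>
    induction hv using Submodule.span_induction with
    | mem y hy => exact lie_S0_S0 V hx hy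
    | zero => rw [lie_zero]; exact zero_mem _
    | add y z _ _ hy hz => rw [lie_add]; exact Submodule.add_mem _ hy hz
    | smul c y _ hy => rw [lie_smul]; exact Submodule.smul_mem _ c hy
  | zero => rw [zero_lie]; exact zero_mem _
  | add y z _ _ hy hz => rw [add_lie]; exact Submodule.add_mem _ hy hz
  | smul c y _ hy => rw [smul_lie]; exact Submodule.smul_mem _ c hy

def nPlusAlg : LieSubalgebra ℂ V :=
  { Submodule.span ℂ (S0 V) with
    lie_mem' := fun {x y} hx hy => lie_span_S0 V hx hy }

lemma nPlus_coe_mem_span (x : nPlus V) : (x : V) ∈ Submodule.span ℂ (S0 V) := by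
  have h : nPlus V ≤ nPlusAlg V := by
    rw [nPlus, LieSubalgebra.lieSpan_le]
    exact Submodule.subset_span
  exact h x.2

lemma span_S0_le_nPlus {v : V} (hv : v ∈ Submodule.span ℂ (S0 V)) : v ∈ nPlus V := by
  have : Submodule.span ℂ (S0 V) ≤ (nPlus V).toSubmodule :=
    Submodule.span_le.mpr fun y hy => LieSubalgebra.subset_lieSpan hy
  exact this hv

lemma isWhittaker_of_gens (ψ : nPlus V →ₗ⁅ℂ⁆ ℂ) {W : Type} [AddCommGroup W] [Module ℂ W]
    [LieRingModule V W] [LieModule ℂ V W] (w' : W)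
    (hL : ∀ (j : ℤ) (hj : 1 ≤ j), ⁅(L j : V), w'⁆ = ψ ⟨L j, L_mem_nPlus V hj⟩ • w')
    (hI : ∀ (j : ℤ) (hj : 1 ≤ j), ⁅(I j : V), w'⁆ = ψ ⟨I j, I_mem_nPlus V hj⟩ • w') :
    IsWhittakerVector V ψ w' := by
  have main : ∀ v, v ∈ Submodule.span ℂ (S0 V) →
      ∀ hv : v ∈ nPlus V, ⁅v, w'⁆ = ψ ⟨v, hv⟩ • w' := by
    intro v hv
    refine Submodule.span_induction ?_ ?_ ?_ ?_ hv
    · rintro y ⟨k, hk, rfl | rfl⟩ hy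
      · rw [hL k hk]
      · rw [hI k hk]
    · intro h0
      rw [zero_lie, show (⟨(0 : V), h0⟩ : nPlus V) = 0 from rfl, map_zero ψ, zero_smul]
    · intro u v hu hv pu pv huv
      rw [add_lie, pu (span_S0_le_nPlus V hu), pv (span_S0_le_nPlus V hv),
        show (⟨u + v, huv⟩ : nPlus V) =
          ⟨u, span_S0_le_nPlus V hu⟩ + ⟨v, span_S0_le_nPlus V hv⟩ from rfl,
        map_add ψ, add_smul]
    · intro c u hu pu hcu
      rw [smul_lie, pu (span_S0_le_nPlus V hu),
        show (⟨c • u, hcu⟩ : nPlus V) = c • ⟨u, span_S0_le_nPlus V hu⟩ from rfl,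
        map_smul ψ, smul_smul]
      rfl
  intro x
  have h := main (x : V) (nPlus_coe_mem_span V x) x.2
  rwa [show (⟨(x : V), x.2⟩ : nPlus V) = x from rfl] at h

section KeyG

variable (ψ : nPlus V →ₗ⁅ℂ⁆ ℂ) (wc : W) (hwc : IsWhittakerVector V ψ wc)

include hwc in
lemma keyG (p : ℕ ×ₗ ℕ) {v : W} (hv : v ∈ G V wc p) (j : ℤ) (hj : 1 ≤ j) :
    (⁅(L j : V), v⁆ - ψ ⟨L j, L_mem_nPlus V hj⟩ • v ∈ G' V wc p) ∧
    (⁅(I j : V), v⁆ - ψ ⟨I j, I_mem_nPlus V hj⟩ • v ∈ G' V wc p) := by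
  refine Submodule.span_induction ?_ ?_ ?_ ?_ hv
  · rintro y ⟨l, hl, rfl⟩
    exact ⟨G'_mono V wc hl ((key V ψ wc hwc l j hj).1),
      G'_mono V wc hl ((key V ψ wc hwc l j hj).2)⟩
  · constructor <;> · rw [lie_zero, smul_zero, sub_zero]; exact zero_mem _
  · intro u v _ _ hu hv
    constructor
    · have e : ⁅(L j : V), u + v⁆ - ψ ⟨L j, L_mem_nPlus V hj⟩ • (u + v) =
          (⁅(L j : V), u⁆ - ψ ⟨L j, L_mem_nPlus V hj⟩ • u) +
          (⁅(L j : V), v⁆ - ψ ⟨L j, L_mem_nPlus V hj⟩ • v) := by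
        rw [lie_add, smul_add]; abel
      rw [e]; exact Submodule.add_mem _ hu.1 hv.1
    · have e : ⁅(I j : V), u + v⁆ - ψ ⟨I j, I_mem_nPlus V hj⟩ • (u + v) =
          (⁅(I j : V), u⁆ - ψ ⟨I j, I_mem_nPlus V hj⟩ • u) +
          (⁅(I j : V), v⁆ - ψ ⟨I j, I_mem_nPlus V hj⟩ • v) := by
        rw [lie_add, smul_add]; abel
      rw [e]; exact Submodule.add_mem _ hu.2 hv.2
  · intro c u _ hu
    constructor
    · have e : ⁅(L j : V), c • u⁆ - ψ ⟨L j, L_mem_nPlus V hj⟩ • (c • u) =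
          c • (⁅(L j : V), u⁆ - ψ ⟨L j, L_mem_nPlus V hj⟩ • u) := by
        rw [lie_smul, smul_sub, smul_comm c]
      rw [e]; exact Submodule.smul_mem _ c hu.1
    · have e : ⁅(I j : V), c • u⁆ - ψ ⟨I j, I_mem_nPlus V hj⟩ • (c • u) =
          c • (⁅(I j : V), u⁆ - ψ ⟨I j, I_mem_nPlus V hj⟩ • u) := by
        rw [lie_smul, smul_sub, smul_comm c]
      rw [e]; exact Submodule.smul_mem _ c hu.2

end KeyG

end TW13

open THV in
/-- every nonzero submodule of a Whittaker module contains a nonzero Whittaker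
vector. -/
theorem exists_whittaker_vector_of_submodule
    (V : Type) [LieRing V] [LieAlgebra ℂ V] [THV V]
    (ψ : nPlus V →ₗ⁅ℂ⁆ ℂ)
    (hL1 : ψ ⟨THV.L 1, L_mem_nPlus V le_rfl⟩ ≠ 0)
    (hL2 : ψ ⟨THV.L 2, L_mem_nPlus V one_le_two⟩ ≠ 0)
    (hI1 : ψ ⟨THV.I 1, I_mem_nPlus V le_rfl⟩ ≠ 0)
    (W : Type) [AddCommGroup W] [Module ℂ W] [LieRingModule V W] [LieModule ℂ V W]
    (wc : W) (hwc : IsWhittakerVector V ψ wc)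
    (hgen : LieSubmodule.lieSpan ℂ V {wc} = ⊤)
    (S : LieSubmodule ℂ V W) (hS : S ≠ ⊥) :
    ∃ w' ∈ S, w' ≠ 0 ∧ IsWhittakerVector V ψ w' := by

  classical
  obtain ⟨s₀, hs₀S, hs₀⟩ : ∃ s ∈ S, s ≠ 0 := by
    by_contra h
    push_neg at h
    exact hS ((LieSubmodule.eq_bot_iff S).mpr h)
  obtain ⟨p, hp⟩ := TW13.exists_G_of_U0 V wc (TW13.mem_U0_of_gen V ψ wc hwc hgen s₀)
  set P : Set (ℕ ×ₗ ℕ) := {q | ∃ s, s ∈ S ∧ s ≠ 0 ∧ s ∈ TW13.G V wc q} with hP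
  have hPne : P.Nonempty := ⟨p, s₀, hs₀S, hs₀, hp⟩
  obtain ⟨p₀, ⟨s', hs'S, hs'0, hs'G⟩, hmin⟩ :=
    (wellFounded_lt (α := ℕ ×ₗ ℕ)).has_min P hPne
  refine ⟨s', hs'S, hs'0, ?_⟩
  have hLw : ∀ (j : ℤ) (hj : 1 ≤ j),
      ⁅(L j : V), s'⁆ = ψ ⟨L j, L_mem_nPlus V hj⟩ • s' := by
    intro j hj
    have ht' := (TW13.keyG V ψ wc hwc p₀ hs'G j hj).1
    by_cases ht0 : ⁅(L j : V), s'⁆ - ψ ⟨L j, L_mem_nPlus V hj⟩ • s' = 0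
    · exact sub_eq_zero.mp ht0
    · rcases TW13.mem_G'_cases V wc ht' with h0 | ⟨q, hq, htG⟩
      · exact absurd h0 ht0
      · have htS : ⁅(L j : V), s'⁆ - ψ ⟨L j, L_mem_nPlus V hj⟩ • s' ∈ S :=
          S.sub_mem (S.lie_mem hs'S) (S.smul_mem _ hs'S)
        exact absurd hq (hmin q ⟨_, htS, ht0, htG⟩)
  have hIw : ∀ (j : ℤ) (hj : 1 ≤ j),
      ⁅(I j : V), s'⁆ = ψ ⟨I j, I_mem_nPlus V hj⟩ • s' := by
    intro j hj
    have ht' := (TW13.keyG V ψ wc hwc p₀ hs'G j hj).2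
    by_cases ht0 : ⁅(I j : V), s'⁆ - ψ ⟨I j, I_mem_nPlus V hj⟩ • s' = 0
    · exact sub_eq_zero.mp ht0
    · rcases TW13.mem_G'_cases V wc ht' with h0 | ⟨q, hq, htG⟩
      · exact absurd h0 ht0
      · have htS : ⁅(I j : V), s'⁆ - ψ ⟨I j, I_mem_nPlus V hj⟩ • s' ∈ S :=
          S.sub_mem (S.lie_mem hs'S) (S.smul_mem _ hs'S)
        exact absurd hq (hmin q ⟨_, htS, ht0, htG⟩)
  exact TW13.isWhittaker_of_gens V ψ s' hLw hIw
end
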